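/- arXiv:2601.20781 — 4 statements merged into one kernel-verified Lean document; each statement's English description precedes it below -/
import Mathlib

section
/- Let K be an n×n real symmetric positive semidefinite matrix, η > 0, and 1 ≤ k ≤ n. Let V_k ∈ ℝ^{n×k} have as columns orthonormal eigenvectors of K associated with the k largest eigenvalues λ_1(K), …, λ_k(K). For any selection operator S ∈ ℝ^{n×k} such that the k×k matrix V_k^T S is invertible, the following chain of inequalities holds: Σ_{i=1}^k log(1 + η^{-2} λ_i(K)) ≥ max_{S'} logdet(I_k + η^{-2} S'^T K S') ≥ logdet(I_k + η^{-2} S^T K S) ≥ Σ_{i=1}^k log(1 + η^{-2} λ_i(K) / ‖(V_k^T S)^{-1}‖_2^2), where the maximum is taken over all selection operators S' ∈ ℝ^{n×k}. -/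
open Matrix BigOperators

/-- The eigenvalues of a Hermitian (real symmetric) matrix, listed in
non-increasing order: `eigsDesc hA i` is the `(i+1)`-th largest eigenvalue. -/
noncomputable def eigsDesc {n : ℕ} {A : Matrix (Fin n) (Fin n) ℝ}
    (hA : A.IsHermitian) : Fin n → ℝ :=
  fun i => (hA.eigenvalues ∘ Tuple.sort hA.eigenvalues) i.rev

/-- The spectral norm (largest singular value) of a real matrix. -/
noncomputable def specNorm {m n : ℕ} (A : Matrix (Fin m) (Fin n) ℝ) : ℝ :=
  ‖LinearMap.toContinuousLinearMap (Matrix.toEuclideanLin A)‖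

/-- `S` is a selection operator: its columns are `k` distinct standard basis
vectors of `ℝ^n`. -/
def IsSelection {n k : ℕ} (S : Matrix (Fin n) (Fin k) ℝ) : Prop :=
  ∃ g : Fin k → Fin n, Function.Injective g ∧
    S = Matrix.of fun i j => if i = g j then (1 : ℝ) else 0

namespace GKS
open scoped RealInnerProductSpace

noncomputable def descPerm {n : ℕ} {A : Matrix (Fin n) (Fin n) ℝ} (hA : A.IsHermitian) :
    Equiv.Perm (Fin n) := (Fin.revPerm).trans (Tuple.sort hA.eigenvalues)

lemma eigsDesc_eq {n : ℕ} {A : Matrix (Fin n) (Fin n) ℝ} (hA : A.IsHermitian) (i : Fin n) :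
    eigsDesc hA i = hA.eigenvalues (descPerm hA i) := rfl

lemma eigsDesc_antitone {n : ℕ} {A : Matrix (Fin n) (Fin n) ℝ} (hA : A.IsHermitian) :
    Antitone (eigsDesc hA) := by
  intro i j hij
  exact Tuple.monotone_sort hA.eigenvalues (Fin.rev_le_rev.mpr hij)

lemma mulVec_dot {a b : ℕ} (C : Matrix (Fin a) (Fin b) ℝ) (y : Fin b → ℝ) (z : Fin a → ℝ) :
    (C *ᵥ y) ⬝ᵥ z = y ⬝ᵥ (Cᵀ *ᵥ z) := by
  rw [dotProduct_comm, Matrix.dotProduct_mulVec, Matrix.mulVec_transpose, dotProduct_comm]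

lemma sum_dot {a : ℕ} {N : Type*} [Fintype N] (f : N → Fin a → ℝ) (w : Fin a → ℝ) :
    (∑ s, f s) ⬝ᵥ w = ∑ s, f s ⬝ᵥ w := by
  simp only [dotProduct, Finset.sum_apply, Finset.sum_mul]
  exact Finset.sum_comm

lemma dot_sum {a : ℕ} {N : Type*} [Fintype N] (w : Fin a → ℝ) (f : N → Fin a → ℝ) :
    w ⬝ᵥ (∑ s, f s) = ∑ s, w ⬝ᵥ f s := by
  simp only [dotProduct, Finset.sum_apply, Finset.mul_sum]
  exact Finset.sum_comm

lemma mulVec_sumv {a b : ℕ} {N : Type*} [Fintype N] (C : Matrix (Fin a) (Fin b) ℝ)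
    (f : N → Fin b → ℝ) : C *ᵥ (∑ s, f s) = ∑ s, C *ᵥ f s :=
  map_sum (Matrix.mulVecLin C) f Finset.univ

lemma dot_osum {a : ℕ} {N : Type*} [Fintype N] [DecidableEq N] (u : N → Fin a → ℝ)
    (h : ∀ s t, u s ⬝ᵥ u t = if s = t then 1 else 0) (c d : N → ℝ) :
    (∑ s, c s • u s) ⬝ᵥ (∑ t, d t • u t) = ∑ s, c s * d s := by
  rw [sum_dot]
  have : ∀ s, (c s • u s) ⬝ᵥ (∑ t, d t • u t) = c s * d s := by
    intro s
    rw [smul_dotProduct, dot_sum]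
    simp only [dotProduct_smul]
    rw [Finset.sum_congr rfl (fun t _ => by rw [h s t])]
    simp [Finset.sum_ite_eq]
  exact Finset.sum_congr rfl (fun s _ => this s)

/-- quadratic form in eigenbasis -/
lemma quadform_eigen {n : ℕ} {M : Matrix (Fin n) (Fin n) ℝ} (hM : M.IsHermitian)
    (x : Fin n → ℝ) :
    x ⬝ᵥ (M *ᵥ x) = ∑ i, hM.eigenvalues i * ((⇑(hM.eigenvectorBasis i) : Fin n → ℝ) ⬝ᵥ x) ^ 2
    ∧ x ⬝ᵥ x = ∑ i, ((⇑(hM.eigenvectorBasis i) : Fin n → ℝ) ⬝ᵥ x) ^ 2 := by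
  set U := (hM.eigenvectorUnitary : Matrix (Fin n) (Fin n) ℝ) with hU
  have hstar : star U = Uᵀ := by
    rw [Matrix.star_eq_conjTranspose, Matrix.conjTranspose_eq_transpose_of_trivial]
  have hUUt : U * Uᵀ = 1 := by
    rw [← hstar]; exact (Matrix.mem_unitaryGroup_iff).mp hM.eigenvectorUnitary.2
  have hUtU : Uᵀ * U = 1 := by
    rw [← hstar]; exact (Matrix.mem_unitaryGroup_iff').mp hM.eigenvectorUnitary.2
  set z := Uᵀ *ᵥ x with hz
  have hzi : ∀ i, z i = (⇑(hM.eigenvectorBasis i) : Fin n → ℝ) ⬝ᵥ x := by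
    intro i
    simp only [hz, Matrix.mulVec, dotProduct, Matrix.transpose_apply]
    exact Finset.sum_congr rfl (fun l _ => rfl)
  have hdiag : ∀ (d : Fin n → ℝ) (v : Fin n → ℝ),
      v ⬝ᵥ (Matrix.diagonal d *ᵥ v) = ∑ i, d i * v i ^ 2 := by
    intro d v
    simp only [dotProduct, Matrix.mulVec_diagonal]
    exact Finset.sum_congr rfl (fun i _ => by ring)
  have hspec : M = U * Matrix.diagonal hM.eigenvalues * Uᵀ := by
    have := hM.spectral_theorem
    rw [Unitary.conjStarAlgAut_apply, hstar] at this
    exact this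
  constructor
  · conv_lhs => rw [hspec]
    have : (U * Matrix.diagonal hM.eigenvalues * Uᵀ) *ᵥ x
        = U *ᵥ (Matrix.diagonal hM.eigenvalues *ᵥ z) := by
      rw [← Matrix.mulVec_mulVec, ← Matrix.mulVec_mulVec]
    rw [this, dotProduct_comm, mulVec_dot, ← hz, dotProduct_comm, hdiag]
    exact Finset.sum_congr rfl (fun i _ => by rw [hzi])
  · have hzz : z ⬝ᵥ z = x ⬝ᵥ x := by
      rw [hz, mulVec_dot, Matrix.transpose_transpose, Matrix.mulVec_mulVec, hUUt,
        Matrix.one_mulVec]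
    rw [← hzz]
    rw [show z ⬝ᵥ z = ∑ i, z i ^ 2 from by simp [dotProduct, pow_two]]
    exact Finset.sum_congr rfl (fun i _ => by rw [hzi])

lemma eigBasis_dot {k : ℕ} {B : Matrix (Fin k) (Fin k) ℝ} (hB : B.IsHermitian) (i j : Fin k) :
    (⇑(hB.eigenvectorBasis i) : Fin k → ℝ) ⬝ᵥ ⇑(hB.eigenvectorBasis j)
      = if i = j then 1 else 0 := by
  have h := orthonormal_iff_ite.mp hB.eigenvectorBasis.orthonormal i j
  rw [EuclideanSpace.inner_eq_star_dotProduct] at h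
  rw [dotProduct_comm]
  simpa using h

/-- Cauchy interlacing style bound: eigenvalues of a compression are bounded by
those of the big matrix. -/
lemma interlace {n k : ℕ} (hkn : k ≤ n) {M : Matrix (Fin n) (Fin n) ℝ} (hM : M.IsHermitian)
    {C : Matrix (Fin n) (Fin k) ℝ} (hC : Cᵀ * C = 1)
    (hB : (Cᵀ * M * C).IsHermitian) (j : Fin k) :
    eigsDesc hB j ≤ eigsDesc hM (Fin.castLE hkn j) := by
  set m := (j : ℕ) with hmdef
  have hm1k : m + 1 ≤ k := j.2
  have hmn : m ≤ n := le_trans (Nat.le_of_lt j.2) hkn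
  set v : Fin k → Fin k → ℝ := fun i => ⇑(hB.eigenvectorBasis i) with hv
  set w : Fin n → Fin n → ℝ := fun i => ⇑(hM.eigenvectorBasis i) with hw
  set qB : Fin (m+1) → Fin k := fun s => descPerm hB (Fin.castLE hm1k s) with hqB
  set pM : Fin m → Fin n := fun t => descPerm hM (Fin.castLE hmn t) with hpM
  -- orthonormal family
  have hvorth : ∀ s t : Fin (m+1), v (qB s) ⬝ᵥ v (qB t) = if s = t then 1 else 0 := by
    intro s t
    rw [hv, eigBasis_dot]
    by_cases h : s = t
    · simp [h]
    · have : qB s ≠ qB t := by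
        intro he
        exact h (Fin.castLE_injective hm1k ((descPerm hB).injective he))
      simp [h, this]
  -- kernel vector
  set G : Matrix (Fin m) (Fin (m+1)) ℝ :=
    Matrix.of (fun t s => w (pM t) ⬝ᵥ (C *ᵥ v (qB s))) with hG
  obtain ⟨a, ha0, haker⟩ : ∃ a : Fin (m+1) → ℝ, a ≠ 0 ∧ G *ᵥ a = 0 := by
    by_contra hcon
    push_neg at hcon
    have hinj : Function.Injective (Matrix.mulVecLin G) := by
      rw [← LinearMap.ker_eq_bot, Submodule.eq_bot_iff]
      intro a ha
      by_contra hne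
      exact hcon a hne ha
    have hle := LinearMap.finrank_le_finrank_of_injective hinj
    simp only [Module.finrank_fintype_fun_eq_card, Fintype.card_fin] at hle
    omega
  set y : Fin k → ℝ := ∑ s, a s • v (qB s) with hy
  set x : Fin n → ℝ := C *ᵥ y with hx
  -- norms
  have hyy : y ⬝ᵥ y = ∑ s, a s * a s := dot_osum _ hvorth a a
  have hyypos : 0 < y ⬝ᵥ y := by
    rw [hyy]
    obtain ⟨s0, hs0⟩ := Function.ne_iff.mp ha0
    exact Finset.sum_pos' (fun s _ => mul_self_nonneg _)
      ⟨s0, Finset.mem_univ s0, mul_self_pos.mpr (by simpa using hs0)⟩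
  have hxx : x ⬝ᵥ x = y ⬝ᵥ y := by
    rw [hx, mulVec_dot, Matrix.mulVec_mulVec, hC, Matrix.one_mulVec]
  -- quadratic form equality
  have hxMx : x ⬝ᵥ (M *ᵥ x) = y ⬝ᵥ ((Cᵀ * M * C) *ᵥ y) := by
    rw [hx, mulVec_dot, Matrix.mulVec_mulVec, Matrix.mulVec_mulVec]
  -- lower bound
  have hBy : (Cᵀ * M * C) *ᵥ y = ∑ s, (hB.eigenvalues (qB s) * a s) • v (qB s) := by
    rw [hy, mulVec_sumv]
    refine Finset.sum_congr rfl (fun s _ => ?_)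
    rw [Matrix.mulVec_smul, hv]
    rw [hB.mulVec_eigenvectorBasis]
    rw [smul_smul, mul_comm]
  have hlow : eigsDesc hB j * (y ⬝ᵥ y) ≤ y ⬝ᵥ ((Cᵀ * M * C) *ᵥ y) := by
    rw [hBy, hy, dot_osum _ hvorth a (fun s => hB.eigenvalues (qB s) * a s), hyy,
      Finset.mul_sum]
    refine Finset.sum_le_sum (fun s _ => ?_)
    have hmu : eigsDesc hB j ≤ hB.eigenvalues (qB s) := by
      have : eigsDesc hB (Fin.castLE hm1k s) = hB.eigenvalues (qB s) := rfl
      rw [← this]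
      exact eigsDesc_antitone hB (by
        simp only [Fin.le_def, Fin.coe_castLE]
        exact Nat.le_of_lt_succ s.2)
    nlinarith [mul_self_nonneg (a s), sq_nonneg (a s)]
  -- upper bound via eigen expansion of M
  obtain ⟨hq1, hq2⟩ := quadform_eigen hM x
  have hzzero : ∀ t : Fin n, (t : ℕ) < m → w (descPerm hM t) ⬝ᵥ x = 0 := by
    intro t ht
    have hteq : descPerm hM t = pM ⟨t, ht⟩ := by
      rw [hpM]
      congr 1
    have hlin : w (pM ⟨t, ht⟩) ⬝ᵥ x = (G *ᵥ a) ⟨t, ht⟩ := by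
      have hGa : (G *ᵥ a) ⟨t, ht⟩ = ∑ s, (w (pM ⟨t, ht⟩) ⬝ᵥ (C *ᵥ v (qB s))) * a s := rfl
      rw [hx, hy, mulVec_sumv, dot_sum, hGa]
      refine Finset.sum_congr rfl (fun s _ => ?_)
      rw [Matrix.mulVec_smul, dotProduct_smul, smul_eq_mul, mul_comm]
    rw [hteq, hlin, haker]
    rfl
  have hup : x ⬝ᵥ (M *ᵥ x) ≤ eigsDesc hM (Fin.castLE hkn j) * (x ⬝ᵥ x) := by
    rw [hq1, hq2, Finset.mul_sum]
    rw [← Fintype.sum_equiv (descPerm hM)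
      (fun t => hM.eigenvalues (descPerm hM t) * (w (descPerm hM t) ⬝ᵥ x) ^ 2)
      (fun i => hM.eigenvalues i * ((⇑(hM.eigenvectorBasis i) : Fin n → ℝ) ⬝ᵥ x) ^ 2)
      (fun t => rfl)]
    rw [← Fintype.sum_equiv (descPerm hM)
      (fun t => eigsDesc hM (Fin.castLE hkn j) * (w (descPerm hM t) ⬝ᵥ x) ^ 2)
      (fun i => eigsDesc hM (Fin.castLE hkn j) * ((⇑(hM.eigenvectorBasis i) : Fin n → ℝ) ⬝ᵥ x) ^ 2)
      (fun t => rfl)]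
    refine Finset.sum_le_sum (fun t _ => ?_)
    by_cases ht : (t : ℕ) < m
    · rw [hzzero t ht]
      simp
    · have h1 : Fin.castLE hkn j ≤ t := by
        rw [Fin.le_def]
        simpa using Nat.le_of_not_lt ht
      have h2 : hM.eigenvalues (descPerm hM t) = eigsDesc hM t := rfl
      rw [h2]
      exact mul_le_mul_of_nonneg_right (eigsDesc_antitone hM h1) (sq_nonneg _)
  -- combine
  have hchain : eigsDesc hB j * (y ⬝ᵥ y) ≤ eigsDesc hM (Fin.castLE hkn j) * (y ⬝ᵥ y) := by
    calc eigsDesc hB j * (y ⬝ᵥ y) ≤ y ⬝ᵥ ((Cᵀ * M * C) *ᵥ y) := hlow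
      _ = x ⬝ᵥ (M *ᵥ x) := hxMx.symm
      _ ≤ eigsDesc hM (Fin.castLE hkn j) * (x ⬝ᵥ x) := hup
      _ = eigsDesc hM (Fin.castLE hkn j) * (y ⬝ᵥ y) := by rw [hxx]
  exact le_of_mul_le_mul_right (by simpa [mul_comm] using hchain) hyypos


lemma det_one_add_smul_eq {k : ℕ} {A : Matrix (Fin k) (Fin k) ℝ} (hA : A.IsHermitian) (c : ℝ) :
    (1 + c • A).det = ∏ i, (1 + c * hA.eigenvalues i) := by
  have h1 : (1 : Matrix (Fin k) (Fin k) ℝ) + c • A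
      = (hA.eigenvectorUnitary : Matrix (Fin k) (Fin k) ℝ)
        * (1 + c • Matrix.diagonal (RCLike.ofReal ∘ hA.eigenvalues))
        * (star (hA.eigenvectorUnitary : Matrix (Fin k) (Fin k) ℝ)) := by
    rw [Matrix.mul_add, Matrix.add_mul]
    congr 1
    · rw [Matrix.mul_one, (Matrix.mem_unitaryGroup_iff).mp hA.eigenvectorUnitary.2]
    · rw [Matrix.mul_smul, Matrix.smul_mul]
      congr 1
      exact hA.spectral_theorem
  rw [h1, Matrix.det_mul, Matrix.det_mul, mul_comm, ← mul_assoc, ← Matrix.det_mul,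
    (Matrix.mem_unitaryGroup_iff').mp hA.eigenvectorUnitary.2, Matrix.det_one, one_mul]
  have : (1 : Matrix (Fin k) (Fin k) ℝ) + c • Matrix.diagonal (RCLike.ofReal ∘ hA.eigenvalues)
      = Matrix.diagonal (fun i => 1 + c * hA.eigenvalues i) := by
    ext i j
    by_cases h : i = j <;> simp [Matrix.diagonal, h, Matrix.one_apply]
  rw [this, Matrix.det_diagonal]

lemma one_le_det_one_add {k : ℕ} {M : Matrix (Fin k) (Fin k) ℝ} (hM : M.PosSemidef) :
    1 ≤ (1 + M).det := by
  have h := det_one_add_smul_eq hM.1 1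
  simp only [one_smul] at h
  rw [h]
  calc (1:ℝ) = ∏ _i : Fin k, (1:ℝ) := by simp
    _ ≤ ∏ i, (1 + 1 * hM.1.eigenvalues i) := by
        refine Finset.prod_le_prod (fun i _ => by norm_num) (fun i _ => ?_)
        have := hM.eigenvalues_nonneg i; linarith

lemma psd_det_nonneg {k : ℕ} {M : Matrix (Fin k) (Fin k) ℝ} (hM : M.PosSemidef) :
    0 ≤ M.det := by
  rw [hM.1.det_eq_prod_eigenvalues]
  exact Finset.prod_nonneg (fun i _ => by exact_mod_cast hM.eigenvalues_nonneg i)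

open scoped MatrixOrder in
lemma det_one_add_le_det_one_add {k : ℕ} {A B : Matrix (Fin k) (Fin k) ℝ}
    (hA : A.PosSemidef) (hBA : (B - A).PosSemidef) :
    (1 + A).det ≤ (1 + B).det := by
  have h1A : (1 + A).PosDef := by
    have : ((1 : Matrix (Fin k) (Fin k) ℝ) + A).PosDef := Matrix.PosDef.add_posSemidef Matrix.PosDef.one hA
    exact this
  set R := CFC.sqrt (1 + A) with hR
  have hRps : R.PosSemidef := Matrix.nonneg_iff_posSemidef.mp (CFC.sqrt_nonneg _)
  have hRR : R * R = 1 + A :=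
    CFC.sqrt_mul_sqrt_self _ (Matrix.nonneg_iff_posSemidef.mpr h1A.posSemidef)
  have hdetR : R.det ≠ 0 := by
    have h2 : R.det * R.det = (1 + A).det := by rw [← Matrix.det_mul, hRR]
    intro h; rw [h, mul_zero] at h2; exact (h1A.det_pos.ne' h2.symm)
  have hRinv : R * R⁻¹ = 1 := Matrix.mul_nonsing_inv R hdetR.isUnit
  have hRinv' : R⁻¹ * R = 1 := Matrix.nonsing_inv_mul R hdetR.isUnit
  have hRsym : Rᵀ = R := hRps.1
  have hM : (R⁻¹ᵀ * (B - A) * R⁻¹).PosSemidef := by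
    have := hBA.conjTranspose_mul_mul_same (R⁻¹)
    simpa [Matrix.conjTranspose_eq_transpose_of_trivial] using this
  have hMsimp : R⁻¹ᵀ * (B - A) * R⁻¹ = R⁻¹ * (B - A) * R⁻¹ := by
    rw [Matrix.transpose_nonsing_inv, hRsym]
  rw [hMsimp] at hM
  have key : 1 + B = R * (1 + R⁻¹ * (B - A) * R⁻¹) * R := by
    rw [Matrix.mul_add, Matrix.add_mul, Matrix.mul_one, hRR]
    have : R * (R⁻¹ * (B - A) * R⁻¹) * R = B - A := by
      rw [← Matrix.mul_assoc, ← Matrix.mul_assoc, hRinv, Matrix.one_mul, Matrix.mul_assoc,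
        hRinv', Matrix.mul_one]
    rw [this]; abel
  rw [key, Matrix.det_mul, Matrix.det_mul]
  have h1 : (1 : ℝ) ≤ (1 + R⁻¹ * (B - A) * R⁻¹).det := one_le_det_one_add hM
  have h2 : R.det * R.det = (1 + A).det := by rw [← Matrix.det_mul, hRR]
  calc (1 + A).det = R.det * 1 * R.det := by rw [mul_one, mul_comm]; exact h2.symm
    _ ≤ R.det * (1 + R⁻¹ * (B - A) * R⁻¹).det * R.det := by
        have hRd : 0 < R.det := lt_of_le_of_ne (psd_det_nonneg hRps) (Ne.symm hdetR)
        nlinarith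


lemma eigsDesc_nonneg {n : ℕ} {K : Matrix (Fin n) (Fin n) ℝ} (hK : K.PosSemidef) (i : Fin n) :
    0 ≤ eigsDesc hK.isHermitian i :=
  hK.eigenvalues_nonneg _

lemma selection_transpose_mul_self {n k : ℕ} {S : Matrix (Fin n) (Fin k) ℝ}
    (hS : ∃ g : Fin k → Fin n, Function.Injective g ∧
      S = Matrix.of fun i j => if i = g j then (1 : ℝ) else 0) :
    Sᵀ * S = 1 := by
  obtain ⟨g, hg, rfl⟩ := hS
  ext j j'
  simp only [Matrix.mul_apply, Matrix.transpose_apply, Matrix.of_apply, Matrix.one_apply]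
  by_cases h : j = j'
  · subst h
    rw [Finset.sum_eq_single (g j)]
    · simp
    · intro b _ hb; simp [hb]
    · simp
  · have : g j ≠ g j' := fun he => h (hg he)
    rw [Finset.sum_eq_zero]
    · simp [h]
    · intro b _
      by_cases hb : b = g j
      · subst hb; simp [this]
      · simp [hb]

lemma prod_eigsDesc {n : ℕ} {A : Matrix (Fin n) (Fin n) ℝ} (hA : A.IsHermitian)
    (g : ℝ → ℝ) : ∏ i, g (eigsDesc hA i) = ∏ i, g (hA.eigenvalues i) :=
  Fintype.prod_equiv (GKS.descPerm hA) (fun i => g (eigsDesc hA i))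
    (fun i => g (hA.eigenvalues i)) (fun _ => rfl)

lemma psd_smul {k : ℕ} {M : Matrix (Fin k) (Fin k) ℝ} (hM : M.PosSemidef) {c : ℝ}
    (hc : 0 ≤ c) : (c • M).PosSemidef := by
  refine Matrix.PosSemidef.of_dotProduct_mulVec_nonneg ?_ ?_
  · rw [Matrix.IsHermitian, Matrix.conjTranspose_smul]
    rw [hM.1.eq]
    simp
  · intro x
    rw [Matrix.smul_mulVec, dotProduct_smul]
    exact mul_nonneg hc (hM.dotProduct_mulVec_nonneg x)

/-- the key per-selection upper bound -/
lemma key {n k : ℕ} (hkn : k ≤ n) {K : Matrix (Fin n) (Fin n) ℝ} (hK : K.PosSemidef)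
    {c : ℝ} (hc : 0 < c) {S' : Matrix (Fin n) (Fin k) ℝ} (hS' : IsSelection S') :
    Real.log ((1 + c • (S'ᵀ * K * S')).det)
      ≤ ∑ i : Fin k, Real.log (1 + c * eigsDesc hK.isHermitian (Fin.castLE hkn i)) := by
  have hSS : S'ᵀ * S' = 1 := selection_transpose_mul_self hS'
  have hBps : (S'ᵀ * K * S').PosSemidef := by
    have := hK.conjTranspose_mul_mul_same S'
    simpa [Matrix.conjTranspose_eq_transpose_of_trivial] using this
  have hBh : (S'ᵀ * K * S').IsHermitian := hBps.isHermitian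
  rw [det_one_add_smul_eq hBh c, ← prod_eigsDesc hBh (fun t => 1 + c * t)]
  have hpos : ∀ i : Fin k, 0 < 1 + c * eigsDesc hBh i := by
    intro i
    have h0 : 0 ≤ eigsDesc hBh i := hBps.eigenvalues_nonneg _
    nlinarith
  rw [Real.log_prod (fun i _ => (hpos i).ne')]
  refine Finset.sum_le_sum (fun i _ => ?_)
  refine Real.log_le_log (hpos i) ?_
  have hle : eigsDesc hBh i ≤ eigsDesc hK.isHermitian (Fin.castLE hkn i) :=
    interlace hkn hK.isHermitian hSS hBh i
  nlinarith

lemma sqrt_dot_eq_norm {p : ℕ} (u : Fin p → ℝ) :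
    Real.sqrt (u ⬝ᵥ u) = ‖(WithLp.equiv 2 (Fin p → ℝ)).symm u‖ := by
  have e : u ⬝ᵥ u = (inner ℝ ((WithLp.equiv 2 (Fin p → ℝ)).symm u)
      ((WithLp.equiv 2 (Fin p → ℝ)).symm u) : ℝ) := rfl
  rw [e, real_inner_self_eq_norm_sq]
  exact Real.sqrt_sq (norm_nonneg _)

lemma specNorm_bound {a b : ℕ} (A : Matrix (Fin a) (Fin b) ℝ) (x : Fin b → ℝ) :
    Real.sqrt ((A *ᵥ x) ⬝ᵥ (A *ᵥ x)) ≤ specNorm A * Real.sqrt (x ⬝ᵥ x) := by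
  rw [sqrt_dot_eq_norm, sqrt_dot_eq_norm]
  have h2 : (WithLp.equiv 2 (Fin a → ℝ)).symm (A *ᵥ x)
      = (LinearMap.toContinuousLinearMap (Matrix.toEuclideanLin A))
          ((WithLp.equiv 2 (Fin b → ℝ)).symm x) := by
    simp [Matrix.toEuclideanLin_apply_piLp_toLp]
  rw [h2]
  exact (LinearMap.toContinuousLinearMap (Matrix.toEuclideanLin A)).le_opNorm _

lemma specNorm_nonneg {a b : ℕ} (A : Matrix (Fin a) (Fin b) ℝ) : 0 ≤ specNorm A :=
  norm_nonneg _

lemma sigma_min {k : ℕ} {W : Matrix (Fin k) (Fin k) ℝ} (hW : IsUnit W.det)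
    (x : Fin k → ℝ) :
    x ⬝ᵥ x ≤ specNorm W⁻¹ ^ 2 * ((Wᵀ *ᵥ x) ⬝ᵥ (Wᵀ *ᵥ x)) := by
  set τ := specNorm W⁻¹ with hτ
  have hτ0 : 0 ≤ τ := specNorm_nonneg _
  have hid : x ⬝ᵥ x = (Wᵀ *ᵥ x) ⬝ᵥ (W⁻¹ *ᵥ x) := by
    rw [mulVec_dot, Matrix.transpose_transpose, Matrix.mulVec_mulVec,
      Matrix.mul_nonsing_inv W hW, Matrix.one_mulVec]
  have hCS : (Wᵀ *ᵥ x) ⬝ᵥ (W⁻¹ *ᵥ x)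
      ≤ Real.sqrt ((Wᵀ *ᵥ x) ⬝ᵥ (Wᵀ *ᵥ x)) * Real.sqrt ((W⁻¹ *ᵥ x) ⬝ᵥ (W⁻¹ *ᵥ x)) := by
    have := real_inner_le_norm ((WithLp.equiv 2 (Fin k → ℝ)).symm (Wᵀ *ᵥ x))
      ((WithLp.equiv 2 (Fin k → ℝ)).symm (W⁻¹ *ᵥ x))
    rw [show (inner ℝ ((WithLp.equiv 2 (Fin k → ℝ)).symm (Wᵀ *ᵥ x))
        ((WithLp.equiv 2 (Fin k → ℝ)).symm (W⁻¹ *ᵥ x)) : ℝ) = (W⁻¹ *ᵥ x) ⬝ᵥ (Wᵀ *ᵥ x) from rfl,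
      dotProduct_comm] at this
    rw [← sqrt_dot_eq_norm, ← sqrt_dot_eq_norm] at this
    simpa using this
  have hop : Real.sqrt ((W⁻¹ *ᵥ x) ⬝ᵥ (W⁻¹ *ᵥ x)) ≤ τ * Real.sqrt (x ⬝ᵥ x) :=
    specNorm_bound W⁻¹ x
  have hx0 : 0 ≤ x ⬝ᵥ x := by
    have : x ⬝ᵥ x = ∑ i, x i * x i := rfl
    rw [this]; exact Finset.sum_nonneg (fun i _ => mul_self_nonneg _)
  have hW0 : 0 ≤ (Wᵀ *ᵥ x) ⬝ᵥ (Wᵀ *ᵥ x) := by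
    have : (Wᵀ *ᵥ x) ⬝ᵥ (Wᵀ *ᵥ x) = ∑ i, (Wᵀ *ᵥ x) i * (Wᵀ *ᵥ x) i := rfl
    rw [this]; exact Finset.sum_nonneg (fun i _ => mul_self_nonneg _)
  have key : x ⬝ᵥ x ≤ Real.sqrt ((Wᵀ *ᵥ x) ⬝ᵥ (Wᵀ *ᵥ x)) * (τ * Real.sqrt (x ⬝ᵥ x)) := by
    calc x ⬝ᵥ x = (Wᵀ *ᵥ x) ⬝ᵥ (W⁻¹ *ᵥ x) := hid
      _ ≤ Real.sqrt ((Wᵀ *ᵥ x) ⬝ᵥ (Wᵀ *ᵥ x)) * Real.sqrt ((W⁻¹ *ᵥ x) ⬝ᵥ (W⁻¹ *ᵥ x)) := hCS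
      _ ≤ Real.sqrt ((Wᵀ *ᵥ x) ⬝ᵥ (Wᵀ *ᵥ x)) * (τ * Real.sqrt (x ⬝ᵥ x)) := by
          exact mul_le_mul_of_nonneg_left hop (Real.sqrt_nonneg _)
  have hsq : x ⬝ᵥ x = Real.sqrt (x ⬝ᵥ x) ^ 2 := (Real.sq_sqrt hx0).symm
  have hsqW : (Wᵀ *ᵥ x) ⬝ᵥ (Wᵀ *ᵥ x) = Real.sqrt ((Wᵀ *ᵥ x) ⬝ᵥ (Wᵀ *ᵥ x)) ^ 2 :=
    (Real.sq_sqrt hW0).symm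
  set sx := Real.sqrt (x ⬝ᵥ x)
  set sw := Real.sqrt ((Wᵀ *ᵥ x) ⬝ᵥ (Wᵀ *ᵥ x))
  have hsx0 : 0 ≤ sx := Real.sqrt_nonneg _
  have hsw0 : 0 ≤ sw := Real.sqrt_nonneg _
  rw [hsq, hsqW]
  rw [hsq] at key
  nlinarith [sq_nonneg (sx - τ * sw), sq_nonneg sx]

lemma trans_herm {p : ℕ} {M : Matrix (Fin p) (Fin p) ℝ} (h : M.IsHermitian) : Mᵀ = M := by
  have h' : Mᴴ = M := h
  rwa [Matrix.conjTranspose_eq_transpose_of_trivial] at h'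

lemma psd_conj {p q : ℕ} {M : Matrix (Fin p) (Fin p) ℝ} (h : M.PosSemidef)
    (B : Matrix (Fin p) (Fin q) ℝ) : (Bᵀ * M * B).PosSemidef := by
  have h2 := h.conjTranspose_mul_mul_same B
  rwa [Matrix.conjTranspose_eq_transpose_of_trivial] at h2

lemma part3 {n k : ℕ} (hk : 1 ≤ k) (hkn : k ≤ n)
    {K : Matrix (Fin n) (Fin n) ℝ} (hK : K.PosSemidef) {c : ℝ} (hc : 0 < c)
    (Vk : Matrix (Fin n) (Fin k) ℝ) (hVk_orth : Vkᵀ * Vk = 1)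
    (hVk_eig : K * Vk = Vk * Matrix.diagonal (fun j : Fin k =>
      eigsDesc hK.isHermitian (Fin.castLE hkn j)))
    (S : Matrix (Fin n) (Fin k) ℝ) (hinv : IsUnit (Vkᵀ * S).det) :
    ∑ i : Fin k, Real.log (1 + c * eigsDesc hK.isHermitian (Fin.castLE hkn i)
        / specNorm ((Vkᵀ * S)⁻¹) ^ 2)
      ≤ Real.log ((1 + c • (Sᵀ * K * S)).det) := by
  set d : Fin k → ℝ := fun j => eigsDesc hK.isHermitian (Fin.castLE hkn j) with hd
  have hd0 : ∀ j, 0 ≤ d j := fun j => eigsDesc_nonneg hK _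
  set W : Matrix (Fin k) (Fin k) ℝ := Vkᵀ * S with hW
  set τ : ℝ := specNorm W⁻¹ with hτ
  have hτ0 : 0 ≤ τ := specNorm_nonneg _
  -- positivity of τ
  have hτpos : 0 < τ := by
    rcases lt_or_eq_of_le hτ0 with h | h
    · exact h
    · exfalso
      have i0 : Fin k := ⟨0, hk⟩
      have hs := sigma_min hinv (Pi.single i0 (1:ℝ))
      rw [← hτ, ← h] at hs
      have h1 : Pi.single i0 (1:ℝ) ⬝ᵥ Pi.single i0 (1:ℝ) = 1 := by
        simp [dotProduct, Pi.single_apply]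
      rw [h1] at hs
      norm_num at hs
  set Λ : Matrix (Fin k) (Fin k) ℝ := Matrix.diagonal d with hΛ
  set Λh : Matrix (Fin k) (Fin k) ℝ := Matrix.diagonal (fun j => Real.sqrt (d j)) with hΛh
  have hΛhΛh : Λh * Λh = Λ := by
    rw [hΛh, Matrix.diagonal_mul_diagonal, hΛ]
    exact congrArg Matrix.diagonal (funext fun j => Real.mul_self_sqrt (hd0 j))
  have hΛht : Λhᵀ = Λh := Matrix.diagonal_transpose _
  have hΛps : Λ.PosSemidef := Matrix.posSemidef_diagonal_iff.mpr hd0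
  -- K - Vk Λ Vkᵀ is PSD
  have hKsym : Kᵀ = K := trans_herm hK.isHermitian
  have hPsym : (Vk * Vkᵀ)ᵀ = Vk * Vkᵀ := by
    rw [Matrix.transpose_mul, Matrix.transpose_transpose]
  have hKP : K * (Vk * Vkᵀ) = Vk * Λ * Vkᵀ := by
    rw [← Matrix.mul_assoc, hVk_eig]
  have hQsym : (Vk * Λ * Vkᵀ)ᵀ = Vk * Λ * Vkᵀ := by
    rw [Matrix.transpose_mul, Matrix.transpose_mul, Matrix.transpose_transpose,
      hΛ, Matrix.diagonal_transpose, Matrix.mul_assoc]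
  have hPK : (Vk * Vkᵀ) * K = Vk * Λ * Vkᵀ := by
    calc (Vk * Vkᵀ) * K = ((Vk * Vkᵀ) * K)ᵀᵀ := (Matrix.transpose_transpose _).symm
      _ = (Kᵀ * (Vk * Vkᵀ)ᵀ)ᵀ := by rw [Matrix.transpose_mul]
      _ = (K * (Vk * Vkᵀ))ᵀ := by rw [hKsym, hPsym]
      _ = (Vk * Λ * Vkᵀ)ᵀ := by rw [hKP]
      _ = Vk * Λ * Vkᵀ := hQsym
  have hQP : (Vk * Λ * Vkᵀ) * (Vk * Vkᵀ) = Vk * Λ * Vkᵀ := by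
    calc (Vk * Λ * Vkᵀ) * (Vk * Vkᵀ) = (Vk * Λ) * (Vkᵀ * Vk * Vkᵀ) := by
          rw [Matrix.mul_assoc (Vk * Λ) Vkᵀ (Vk * Vkᵀ), ← Matrix.mul_assoc Vkᵀ Vk Vkᵀ]
      _ = (Vk * Λ) * Vkᵀ := by rw [hVk_orth, Matrix.one_mul]
  have hdiffPSD : (K - Vk * Λ * Vkᵀ).PosSemidef := by
    have hid : K - Vk * Λ * Vkᵀ = (1 - Vk * Vkᵀ)ᵀ * K * (1 - Vk * Vkᵀ) := by
      rw [Matrix.transpose_sub, Matrix.transpose_one, hPsym]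
      simp only [Matrix.sub_mul, Matrix.mul_sub, Matrix.one_mul, Matrix.mul_one]
      rw [hKP, hPK, hQP]
      abel
    rw [hid]
    exact psd_conj hK _
  -- step 1
  have hWtΛW : Wᵀ * Λ * W = Sᵀ * (Vk * Λ * Vkᵀ) * S := by
    simp only [hW, Matrix.transpose_mul, Matrix.transpose_transpose, Matrix.mul_assoc]
  have hcomp_psd : (Wᵀ * Λ * W).PosSemidef := psd_conj hΛps W
  have hdiff2 : (Sᵀ * K * S) - (Wᵀ * Λ * W) = Sᵀ * (K - Vk * Λ * Vkᵀ) * S := by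
    rw [hWtΛW]
    simp only [Matrix.mul_sub, Matrix.sub_mul]
  have hstep1 : (1 + c • (Wᵀ * Λ * W)).det ≤ (1 + c • (Sᵀ * K * S)).det := by
    refine det_one_add_le_det_one_add (psd_smul hcomp_psd hc.le) ?_
    have he : c • (Sᵀ * K * S) - c • (Wᵀ * Λ * W)
        = c • ((Sᵀ * K * S) - (Wᵀ * Λ * W)) := (smul_sub c _ _).symm
    rw [he, hdiff2]
    exact psd_smul (psd_conj hdiffPSD S) hc.le
  -- step 2
  have hstep2 : (1 + c • (Wᵀ * Λ * W)).det = (1 + c • (Λh * (W * Wᵀ) * Λh)).det := by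
    have h1 : (1 : Matrix (Fin k) (Fin k) ℝ) + c • (Wᵀ * Λ * W)
        = 1 + (Wᵀ * Λh) * (c • (Λh * W)) := by
      congr 1
      rw [Matrix.mul_smul]
      congr 1
      rw [Matrix.mul_assoc Wᵀ Λh (Λh * W), ← Matrix.mul_assoc Λh Λh W, hΛhΛh,
        ← Matrix.mul_assoc Wᵀ Λ W]
    have h2 : (c • (Λh * W)) * (Wᵀ * Λh) = c • (Λh * (W * Wᵀ) * Λh) := by
      rw [Matrix.smul_mul]
      congr 1
      rw [Matrix.mul_assoc Λh W (Wᵀ * Λh), ← Matrix.mul_assoc W Wᵀ Λh,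
        ← Matrix.mul_assoc Λh (W * Wᵀ) Λh]
    rw [h1, Matrix.det_one_add_mul_comm, h2]
  -- step 3
  have hWWt : ((W * Wᵀ) - (τ^2)⁻¹ • 1).PosSemidef := by
    refine Matrix.PosSemidef.of_dotProduct_mulVec_nonneg ?_ ?_
    · show ((W * Wᵀ) - (τ^2)⁻¹ • 1)ᴴ = _
      rw [Matrix.conjTranspose_eq_transpose_of_trivial, Matrix.transpose_sub,
        Matrix.transpose_smul, Matrix.transpose_one, Matrix.transpose_mul,
        Matrix.transpose_transpose]
    · intro x
      have hsimp : star x = x := by funext i; simp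
      rw [hsimp, Matrix.sub_mulVec, dotProduct_sub, Matrix.smul_mulVec,
        Matrix.one_mulVec, dotProduct_smul]
      have hq : x ⬝ᵥ ((W * Wᵀ) *ᵥ x) = (Wᵀ *ᵥ x) ⬝ᵥ (Wᵀ *ᵥ x) := by
        rw [← Matrix.mulVec_mulVec, dotProduct_comm, mulVec_dot, dotProduct_comm]
      rw [hq]
      have hsig := sigma_min hinv x
      rw [← hτ] at hsig
      rw [smul_eq_mul]
      have hτ2 : 0 < τ^2 := by positivity
      have hinv2 : 0 < (τ^2)⁻¹ := by positivity
      have h5 := mul_le_mul_of_nonneg_left hsig (le_of_lt hinv2)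
      rw [← mul_assoc, inv_mul_cancel₀ hτ2.ne', one_mul] at h5
      linarith
  have hmid : Λh * ((W * Wᵀ) - (τ^2)⁻¹ • 1) * Λh
      = Λh * (W * Wᵀ) * Λh - (τ^2)⁻¹ • Λ := by
    rw [Matrix.mul_sub, Matrix.sub_mul]
    congr 1
    rw [Matrix.mul_smul, Matrix.mul_one, Matrix.smul_mul, hΛhΛh]
  have hstep3 : (1 + (c * (τ^2)⁻¹) • Λ).det ≤ (1 + c • (Λh * (W * Wᵀ) * Λh)).det := by
    refine det_one_add_le_det_one_add (psd_smul hΛps (by positivity)) ?_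
    have heq : c • (Λh * (W * Wᵀ) * Λh) - (c * (τ^2)⁻¹) • Λ
        = c • (Λh * ((W * Wᵀ) - (τ^2)⁻¹ • 1) * Λh) := by
      rw [hmid, smul_sub, smul_smul]
    rw [heq]
    refine psd_smul ?_ hc.le
    have hpc := psd_conj hWWt Λh
    rwa [hΛht] at hpc
  -- final diagonal determinant
  have hdetdiag : (1 + (c * (τ^2)⁻¹) • Λ).det = ∏ j, (1 + c * d j / τ^2) := by
    have he : (1 : Matrix (Fin k) (Fin k) ℝ) + (c * (τ^2)⁻¹) • Λ
        = Matrix.diagonal (fun j => 1 + c * d j / τ^2) := by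
      rw [hΛ]
      ext i j
      by_cases h : i = j
      · subst h
        simp [Matrix.diagonal, Matrix.one_apply]
        ring
      · simp [Matrix.diagonal, h, Matrix.one_apply]
    rw [he, Matrix.det_diagonal]
  have hfpos : ∀ j : Fin k, 0 < 1 + c * d j / τ^2 := by
    intro j
    have h1 : 0 ≤ c * d j / τ^2 :=
      div_nonneg (mul_nonneg hc.le (hd0 j)) (by positivity)
    linarith
  have hchain : ∏ j, (1 + c * d j / τ^2) ≤ (1 + c • (Sᵀ * K * S)).det := by
    refine le_trans (le_of_eq hdetdiag.symm) (le_trans hstep3 ?_)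
    exact le_trans (le_of_eq hstep2.symm) hstep1
  have hlogeq : ∑ i : Fin k, Real.log (1 + c * d i / τ^2)
      = Real.log (∏ j, (1 + c * d j / τ^2)) :=
    (Real.log_prod (fun j _ => (hfpos j).ne')).symm
  rw [hlogeq]
  exact Real.log_le_log (Finset.prod_pos (fun j _ => hfpos j)) hchain

end GKS

/-- Bounds on the D-optimality criterion for the GKS
selection (Theorem 3.1): for any selection operator `S` with `Vₖᵀ S`
invertible,
`∑ log(1 + η⁻² λᵢ(K)) ≥ sup_{S'} logdet(I + η⁻² S'ᵀ K S')`
`≥ logdet(I + η⁻² Sᵀ K S) ≥ ∑ log(1 + η⁻² λᵢ(K) / ‖(VₖᵀS)⁻¹‖₂²)`. -/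
theorem stmt_0 {n k : ℕ} (hk : 1 ≤ k) (hkn : k ≤ n)
    {K : Matrix (Fin n) (Fin n) ℝ} (hK : K.PosSemidef)
    {η : ℝ} (hη : 0 < η)
    (Vk : Matrix (Fin n) (Fin k) ℝ)
    (hVk_orth : Vkᵀ * Vk = 1)
    (hVk_eig : K * Vk =
      Vk * Matrix.diagonal (fun j : Fin k =>
        eigsDesc hK.isHermitian (Fin.castLE hkn j)))
    (S : Matrix (Fin n) (Fin k) ℝ) (hS : IsSelection S)
    (hinv : IsUnit (Vkᵀ * S).det) :
    (⨆ S' : {M : Matrix (Fin n) (Fin k) ℝ // IsSelection M},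
        Real.log ((1 + η⁻¹ ^ 2 • ((S' : Matrix (Fin n) (Fin k) ℝ)ᵀ * K * (S' : Matrix (Fin n) (Fin k) ℝ))).det))
      ≤ ∑ i : Fin k, Real.log (1 + η⁻¹ ^ 2 * eigsDesc hK.isHermitian (Fin.castLE hkn i))
    ∧ Real.log ((1 + η⁻¹ ^ 2 • (Sᵀ * K * S)).det)
      ≤ ⨆ S' : {M : Matrix (Fin n) (Fin k) ℝ // IsSelection M},
          Real.log ((1 + η⁻¹ ^ 2 • ((S' : Matrix (Fin n) (Fin k) ℝ)ᵀ * K * (S' : Matrix (Fin n) (Fin k) ℝ))).det)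
    ∧ ∑ i : Fin k, Real.log (1 + η⁻¹ ^ 2 * eigsDesc hK.isHermitian (Fin.castLE hkn i)
          / specNorm ((Vkᵀ * S)⁻¹) ^ 2)
      ≤ Real.log ((1 + η⁻¹ ^ 2 • (Sᵀ * K * S)).det) := by
  have hcpos : 0 < η⁻¹ ^ 2 := by positivity
  have hne : Nonempty {M : Matrix (Fin n) (Fin k) ℝ // IsSelection M} := ⟨⟨S, hS⟩⟩
  have hkey : ∀ S' : {M : Matrix (Fin n) (Fin k) ℝ // IsSelection M},
      Real.log ((1 + η⁻¹ ^ 2 • ((S' : Matrix (Fin n) (Fin k) ℝ)ᵀ * K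
          * (S' : Matrix (Fin n) (Fin k) ℝ))).det)
        ≤ ∑ i : Fin k, Real.log (1 + η⁻¹ ^ 2 * eigsDesc hK.isHermitian (Fin.castLE hkn i)) :=
    fun S' => GKS.key hkn hK hcpos S'.2
  refine ⟨ciSup_le hkey, ?_, ?_⟩
  · exact le_ciSup ⟨_, by rintro v ⟨S', rfl⟩; exact hkey S'⟩
      (⟨S, hS⟩ : {M : Matrix (Fin n) (Fin k) ℝ // IsSelection M})
  · exact GKS.part3 hk hkn hK hcpos Vk hVk_orth hVk_eig S hinv
end

section
/- Let K be an n×n real symmetric positive semidefinite matrix and 1 ≤ k ≤ n. Let V_k ∈ ℝ^{n×k} have as columns orthonormal eigenvectors of K associated with the k largest eigenvalues λ_1(K), …, λ_k(K), and let S ∈ ℝ^{n×k} be a selection operator such that V_k^T S is invertible. Then for every 1 ≤ i ≤ k, λ_i(K) ≤ ‖(V_k^T S)^{-1}‖_2^2 · λ_i(S^T K S), where λ_i(S^T K S) is the i-th largest eigenvalue of the k×k symmetric matrix S^T K S. -/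
open Matrix BigOperators
open scoped RealInnerProductSpace

lemma quad_eq {k : ℕ} {M : Matrix (Fin k) (Fin k) ℝ} (hM : M.IsHermitian)
    (x : EuclideanSpace ℝ (Fin k)) :
    ⟪x, Matrix.toEuclideanLin M x⟫
      = ∑ l, hM.eigenvalues l * (⟪hM.eigenvectorBasis l, x⟫)^2 := by
  set b := hM.eigenvectorBasis with hb
  set c : Fin k → ℝ := fun l => ⟪b l, x⟫ with hc
  have hsum : ∑ l, c l • b l = x := b.sum_repr' x
  have hMb : ∀ l, Matrix.toEuclideanLin M (b l) = hM.eigenvalues l • b l := by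
    intro l
    apply (WithLp.equiv 2 (Fin k → ℝ)).injective
    simp only [WithLp.equiv_apply, Matrix.ofLp_toEuclideanLin_apply]
    simpa using hM.mulVec_eigenvectorBasis l
  have hMx : Matrix.toEuclideanLin M x = ∑ l, (hM.eigenvalues l * c l) • b l := by
    rw [← hsum, map_sum]
    refine Finset.sum_congr rfl fun l _ => ?_
    rw [_root_.map_smul, hMb, smul_smul, mul_comm]
  calc ⟪x, Matrix.toEuclideanLin M x⟫
      = ⟪∑ l, c l • b l, ∑ l, (hM.eigenvalues l * c l) • b l⟫ := by rw [hsum, ← hMx]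
    _ = ∑ l, c l * (hM.eigenvalues l * c l) := by
        simpa using b.orthonormal.inner_sum c (fun l => hM.eigenvalues l * c l) Finset.univ
    _ = ∑ l, hM.eigenvalues l * (c l)^2 := by
        refine Finset.sum_congr rfl fun l _ => by ring

lemma self_eq {k : ℕ} {M : Matrix (Fin k) (Fin k) ℝ} (hM : M.IsHermitian)
    (x : EuclideanSpace ℝ (Fin k)) :
    ⟪x, x⟫ = ∑ l, (⟪hM.eigenvectorBasis l, x⟫)^2 := by
  set b := hM.eigenvectorBasis with hb
  set c : Fin k → ℝ := fun l => ⟪b l, x⟫ with hc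
  have hsum : ∑ l, c l • b l = x := b.sum_repr' x
  calc ⟪x, x⟫ = ⟪∑ l, c l • b l, ∑ l, c l • b l⟫ := by rw [hsum]
    _ = ∑ l, c l * c l := by simpa using b.orthonormal.inner_sum c c Finset.univ
    _ = ∑ l, (c l)^2 := by refine Finset.sum_congr rfl fun l _ => by ring

lemma courant_min {k : ℕ} {M : Matrix (Fin k) (Fin k) ℝ} (hM : M.IsHermitian) (i : Fin k)
    (U : Submodule ℝ (EuclideanSpace ℝ (Fin k))) (hU : (i : ℕ) + 1 ≤ Module.finrank ℝ U)
    (v : ℝ)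
    (hv : ∀ x ∈ U, v * ⟪x, x⟫ ≤ ⟪x, Matrix.toEuclideanLin M x⟫) :
    v ≤ eigsDesc hM i := by
  classical
  set μ := hM.eigenvalues with hμ
  set σ := Tuple.sort μ with hσ
  set b := hM.eigenvectorBasis with hb
  set r : ℕ := (i.rev : ℕ) with hr
  have hrk : r + 1 ≤ k := i.rev.isLt
  set g : Fin (r + 1) → Fin k := fun j => σ (Fin.castLE hrk j) with hg
  have hginj : Function.Injective g :=
    σ.injective.comp (Fin.castLE_injective hrk)
  have hfam : Orthonormal ℝ (fun j => b (g j)) := b.orthonormal.comp g hginj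
  set F : Submodule ℝ (EuclideanSpace ℝ (Fin k)) :=
    Submodule.span ℝ (Set.range fun j => b (g j)) with hF
  have hFrank : Module.finrank ℝ F = r + 1 := by
    rw [hF, finrank_span_eq_card hfam.linearIndependent, Fintype.card_fin]
  -- dimension count
  have htot : Module.finrank ℝ (EuclideanSpace ℝ (Fin k)) = k := by
    simp [finrank_euclideanSpace]
  have hinf : 0 < Module.finrank ℝ (U ⊓ F : Submodule ℝ (EuclideanSpace ℝ (Fin k))) := by
    have h1 := Submodule.finrank_sup_add_finrank_inf_eq U F
    have h2 : Module.finrank ℝ (U ⊔ F : Submodule ℝ (EuclideanSpace ℝ (Fin k))) ≤ k := by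
      have := Submodule.finrank_le (U ⊔ F)
      rwa [htot] at this
    have hrv : (i : ℕ) + r = k - 1 := by
      have := i.isLt
      have : (i.rev : ℕ) = k - 1 - (i : ℕ) := Fin.val_rev i ▸ by omega
      omega
    have hik := i.isLt
    omega
  obtain ⟨x, hxUF, hx0⟩ : ∃ x ∈ (U ⊓ F : Submodule ℝ (EuclideanSpace ℝ (Fin k))), x ≠ 0 := by
    by_contra h
    push_neg at h
    have : (U ⊓ F : Submodule ℝ (EuclideanSpace ℝ (Fin k))) = ⊥ := by
      ext y; simp only [Submodule.mem_bot]
      exact ⟨fun hy => h y hy, fun hy => hy ▸ Submodule.zero_mem _⟩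
    rw [this, finrank_bot] at hinf
    exact lt_irrefl 0 hinf
  have hxU : x ∈ U := hxUF.1
  have hxF : x ∈ F := hxUF.2
  -- coefficients vanish off the range of g
  have hcoef : ∀ l : Fin k, l ∉ Set.range g → ⟪b l, x⟫ = 0 := by
    intro l hl
    have hker : F ≤ LinearMap.ker (innerSL ℝ (b l) : EuclideanSpace ℝ (Fin k) →ₗ[ℝ] ℝ) := by
      rw [hF, Submodule.span_le]
      rintro _ ⟨j, rfl⟩
      simp only [SetLike.mem_coe, LinearMap.mem_ker]
      have : l ≠ g j := fun h => hl ⟨j, h.symm⟩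
      simpa using b.orthonormal.2 this
    have := hker hxF
    simpa using this
  -- the quadratic form bound on F
  have hupper : ⟪x, Matrix.toEuclideanLin M x⟫ ≤ μ (σ i.rev) * ⟪x, x⟫ := by
    rw [quad_eq hM x, self_eq hM x, Finset.mul_sum]
    refine Finset.sum_le_sum fun l _ => ?_
    by_cases hcl : ⟪b l, x⟫ = 0
    · simp [hcl, ← hb]
    · have hlr : l ∈ Set.range g := by
        by_contra h; exact hcl (hcoef l h)
      obtain ⟨j, rfl⟩ := hlr
      have hle : μ (g j) ≤ μ (σ i.rev) := by
        have hmono := Tuple.monotone_sort μ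
        have : (Fin.castLE hrk j : Fin k) ≤ i.rev := by
          have := j.isLt
          simp only [Fin.le_def, Fin.coe_castLE]
          omega
        exact hmono this
      exact mul_le_mul_of_nonneg_right hle (sq_nonneg _)
  have hpos : (0 : ℝ) < ⟪x, x⟫ := by
    rw [real_inner_self_eq_norm_sq]
    have : ‖x‖ ≠ 0 := norm_ne_zero_iff.mpr hx0
    positivity
  have h1 : v * ⟪x, x⟫ ≤ μ (σ i.rev) * ⟪x, x⟫ := (hv x hxU).trans hupper
  have : v ≤ μ (σ i.rev) := le_of_mul_le_mul_right (by linarith) hpos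
  simpa [eigsDesc] using this

/-- Key eigenvalue bound in the proof of Theorem 3.1:
`λᵢ(K) ≤ ‖(VₖᵀS)⁻¹‖₂² · λᵢ(SᵀKS)` for `1 ≤ i ≤ k`. -/
theorem stmt_1 {n k : ℕ} (hk : 1 ≤ k) (hkn : k ≤ n)
    {K : Matrix (Fin n) (Fin n) ℝ} (hK : K.PosSemidef)
    (Vk : Matrix (Fin n) (Fin k) ℝ)
    (hVk_orth : Vkᵀ * Vk = 1)
    (hVk_eig : K * Vk =
      Vk * Matrix.diagonal (fun j : Fin k =>
        eigsDesc hK.isHermitian (Fin.castLE hkn j)))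
    (S : Matrix (Fin n) (Fin k) ℝ) (hS : IsSelection S)
    (hinv : IsUnit (Vkᵀ * S).det)
    (hSKS : (Sᵀ * K * S).IsHermitian) :
    ∀ i : Fin k,
      eigsDesc hK.isHermitian (Fin.castLE hkn i)
        ≤ specNorm ((Vkᵀ * S)⁻¹) ^ 2 * eigsDesc hSKS i := by
  classical
  intro i
  set d : Fin k → ℝ := fun j => eigsDesc hK.isHermitian (Fin.castLE hkn j) with hd
  set Λ : Matrix (Fin k) (Fin k) ℝ := Matrix.diagonal d with hΛ
  set W : Matrix (Fin k) (Fin k) ℝ := Vkᵀ * S with hW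
  set M : Matrix (Fin k) (Fin k) ℝ := Sᵀ * K * S with hM
  have hWW : W * W⁻¹ = 1 := Matrix.mul_nonsing_inv W hinv
  have hW'W : W⁻¹ * W = 1 := Matrix.nonsing_inv_mul W hinv
  have hKT : Kᵀ = K := by
    have := hK.isHermitian.eq
    rwa [Matrix.conjTranspose_eq_transpose_of_trivial] at this
  have hd0 : ∀ j, 0 ≤ d j := by
    intro j
    exact hK.eigenvalues_nonneg _
  have hdmono : ∀ j j' : Fin k, j ≤ j' → d j' ≤ d j := by
    intro j j' hjj
    have hmono := Tuple.monotone_sort hK.isHermitian.eigenvalues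
    have hrev : (Fin.castLE hkn j').rev ≤ (Fin.castLE hkn j).rev := by
      simp only [Fin.le_def, Fin.val_rev, Fin.coe_castLE]
      have := hjj
      simp only [Fin.le_def] at this
      omega
    exact hmono hrev
  -- algebraic identity : M - Wᵀ * Λ * W is PSD
  have hKP : K * (Vk * Vkᵀ) = Vk * Λ * Vkᵀ := by
    rw [← Matrix.mul_assoc, hVk_eig]
  have hPK : (Vk * Vkᵀ) * K = Vk * Λ * Vkᵀ := by
    have h1 : ((Vk * Vkᵀ) * K)ᵀ = K * (Vk * Vkᵀ) := by
      rw [Matrix.transpose_mul, hKT, Matrix.transpose_mul, Matrix.transpose_transpose]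
    have h2 := congrArg Matrix.transpose h1
    rw [Matrix.transpose_transpose] at h2
    rw [h2, hKP, Matrix.transpose_mul, Matrix.transpose_mul, Matrix.transpose_transpose,
      Matrix.diagonal_transpose, Matrix.mul_assoc]
  have hPKP : (Vk * Vkᵀ) * K * (Vk * Vkᵀ) = Vk * Λ * Vkᵀ := by
    rw [hPK, Matrix.mul_assoc (Vk * Λ) Vkᵀ (Vk * Vkᵀ), ← Matrix.mul_assoc Vkᵀ Vk Vkᵀ, hVk_orth,
      Matrix.one_mul]
  have hmid : (1 - Vk * Vkᵀ) * K * (1 - Vk * Vkᵀ) = K - Vk * Λ * Vkᵀ := by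
    have hexp : (1 - Vk * Vkᵀ) * K * (1 - Vk * Vkᵀ)
        = K - (Vk * Vkᵀ) * K - K * (Vk * Vkᵀ) + (Vk * Vkᵀ) * K * (Vk * Vkᵀ) := by
      noncomm_ring
    rw [hexp, hPKP, hPK, hKP]
    abel
  have hsub : M - Wᵀ * Λ * W = ((1 - Vk * Vkᵀ) * S)ᴴ * K * ((1 - Vk * Vkᵀ) * S) := by
    have hPsymm : (Vk * Vkᵀ)ᵀ = Vk * Vkᵀ := by
      rw [Matrix.transpose_mul, Matrix.transpose_transpose]
    have hBt : ((1 - Vk * Vkᵀ) * S)ᵀ = Sᵀ * (1 - Vk * Vkᵀ) := by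
      rw [Matrix.transpose_mul, Matrix.transpose_sub, Matrix.transpose_one, hPsymm]
    have hWt : Wᵀ = Sᵀ * Vk := by
      rw [hW, Matrix.transpose_mul, Matrix.transpose_transpose]
    have hR : Sᵀ * (1 - Vk * Vkᵀ) * K * ((1 - Vk * Vkᵀ) * S)
        = Sᵀ * ((1 - Vk * Vkᵀ) * K * (1 - Vk * Vkᵀ)) * S := by
      simp only [Matrix.mul_assoc]
    rw [Matrix.conjTranspose_eq_transpose_of_trivial, hBt, hR, hmid, hWt, hM, hW,
      Matrix.mul_sub, Matrix.sub_mul]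
    simp only [Matrix.mul_assoc]
  have hPSD : (M - Wᵀ * Λ * W).PosSemidef := by
    rw [hsub]
    exact hK.conjTranspose_mul_mul_same _
  -- pointwise quadratic form inequality
  have hq : ∀ y : Fin k → ℝ, (W *ᵥ y) ⬝ᵥ (Λ *ᵥ (W *ᵥ y)) ≤ y ⬝ᵥ (M *ᵥ y) := by
    intro y
    have h0 := hPSD.dotProduct_mulVec_nonneg y
    rw [Matrix.sub_mulVec, dotProduct_sub] at h0
    simp only [star_trivial] at h0
    have hWtr : y ⬝ᵥ ((Wᵀ * Λ * W) *ᵥ y) = (W *ᵥ y) ⬝ᵥ (Λ *ᵥ (W *ᵥ y)) := by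
      rw [← Matrix.mulVec_mulVec, ← Matrix.mulVec_mulVec, Matrix.dotProduct_mulVec,
        Matrix.vecMul_transpose]
    rw [hWtr] at h0
    linarith
  -- diagonal quadratic form
  have hdiag : ∀ z : Fin k → ℝ, z ⬝ᵥ (Λ *ᵥ z) = ∑ j, d j * (z j)^2 := by
    intro z
    simp only [dotProduct, Matrix.mulVec_diagonal, hΛ]
    exact Finset.sum_congr rfl fun j _ => by ring
  -- subspace U = W⁻¹ · span(e_0, ..., e_i)
  set f : EuclideanSpace ℝ (Fin k) →ₗ[ℝ] EuclideanSpace ℝ (Fin k) :=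
    Matrix.toEuclideanLin W⁻¹ with hf
  set gl : EuclideanSpace ℝ (Fin k) →ₗ[ℝ] EuclideanSpace ℝ (Fin k) :=
    Matrix.toEuclideanLin W with hgl
  have hgf : ∀ x, gl (f x) = x := by
    intro x
    simp [hf, hgl, Matrix.toEuclideanLin_apply, Matrix.mulVec_mulVec, hWW, Matrix.one_mulVec]
  have finj : Function.Injective f := Function.LeftInverse.injective hgf
  have fker : LinearMap.ker f = ⊥ := LinearMap.ker_eq_bot.mpr finj
  have hik : (i : ℕ) + 1 ≤ k := i.isLt
  set fam : Fin ((i : ℕ) + 1) → EuclideanSpace ℝ (Fin k) :=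
    fun m => f (EuclideanSpace.single (Fin.castLE hik m) 1) with hfam
  have hli0 : LinearIndependent ℝ
      (fun m : Fin ((i : ℕ) + 1) => EuclideanSpace.single (𝕜 := ℝ) (Fin.castLE hik m) 1) := by
    have h1 := ((EuclideanSpace.basisFun (Fin k) ℝ).toBasis.linearIndependent).comp
      (Fin.castLE hik) (Fin.castLE_injective hik)
    simpa [Function.comp_def, EuclideanSpace.basisFun_apply] using h1
  have hli : LinearIndependent ℝ fam := hli0.map' f fker
  set U : Submodule ℝ (EuclideanSpace ℝ (Fin k)) := Submodule.span ℝ (Set.range fam) with hU'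
  have hU : (i : ℕ) + 1 ≤ Module.finrank ℝ U := by
    rw [hU', finrank_span_eq_card hli, Fintype.card_fin]
  -- membership property
  have hmem : ∀ x ∈ U, ∀ j : Fin k, i < j → (W *ᵥ (WithLp.equiv 2 (Fin k → ℝ) x)) j = 0 := by
    intro x hx
    refine Submodule.span_induction ?_ ?_ ?_ ?_ hx
    · rintro _ ⟨m, rfl⟩ j hij
      have h1 : WithLp.equiv 2 (Fin k → ℝ) (fam m)
          = W⁻¹ *ᵥ Pi.single (Fin.castLE hik m) 1 := by
        simp [hfam, hf, Matrix.toEuclideanLin_apply]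
      rw [h1, Matrix.mulVec_mulVec, hWW, Matrix.one_mulVec]
      have hne : Fin.castLE hik m ≠ j := by
        intro h
        have := m.isLt
        have := Fin.lt_def.mp hij
        have : ((Fin.castLE hik m : Fin k) : ℕ) = (j : ℕ) := congrArg Fin.val h
        simp only [Fin.coe_castLE] at this
        omega
      exact Pi.single_eq_of_ne (Ne.symm hne) 1
    · intro j hij; simp
    · intro a b _ _ ha hb j hij
      have : WithLp.equiv 2 (Fin k → ℝ) (a + b)
          = WithLp.equiv 2 (Fin k → ℝ) a + WithLp.equiv 2 (Fin k → ℝ) b := rfl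
      rw [this, Matrix.mulVec_add]
      rw [Pi.add_apply, ha j hij, hb j hij, add_zero]
    · intro r a _ ha j hij
      have : WithLp.equiv 2 (Fin k → ℝ) (r • a) = r • WithLp.equiv 2 (Fin k → ℝ) a := rfl
      rw [this, Matrix.mulVec_smul]
      rw [Pi.smul_apply, ha j hij, smul_zero]
  -- the spectral norm
  set c : ℝ := specNorm W⁻¹ with hc
  have hfb : ∀ zE : EuclideanSpace ℝ (Fin k), ‖f zE‖ ≤ c * ‖zE‖ := by
    intro zE
    calc ‖f zE‖
        = ‖(LinearMap.toContinuousLinearMap (Matrix.toEuclideanLin W⁻¹)) zE‖ := rfl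
      _ ≤ ‖LinearMap.toContinuousLinearMap (Matrix.toEuclideanLin W⁻¹)‖ * ‖zE‖ :=
          (LinearMap.toContinuousLinearMap (Matrix.toEuclideanLin W⁻¹)).le_opNorm zE
      _ = c * ‖zE‖ := rfl
  have hc0 : 0 < c := by
    have hne : fam ⟨0, Nat.succ_pos _⟩ ≠ 0 := hli.ne_zero _
    have h1 : 0 < ‖fam ⟨0, Nat.succ_pos _⟩‖ := by
      rw [norm_pos_iff]; exact hne
    have h2 := hfb (EuclideanSpace.single (𝕜 := ℝ) (Fin.castLE hik ⟨0, Nat.succ_pos _⟩) 1)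
    have h3 : ‖f (EuclideanSpace.single (𝕜 := ℝ) (Fin.castLE hik ⟨0, Nat.succ_pos _⟩) 1)‖
        = ‖fam ⟨0, Nat.succ_pos _⟩‖ := rfl
    rw [h3] at h2
    nlinarith [norm_nonneg (EuclideanSpace.single (𝕜 := ℝ)
      (Fin.castLE hik ⟨0, Nat.succ_pos _⟩) 1)]
  -- the inner product bridge
  have hip : ∀ x y : EuclideanSpace ℝ (Fin k),
      ⟪x, y⟫ = (WithLp.equiv 2 (Fin k → ℝ) x) ⬝ᵥ (WithLp.equiv 2 (Fin k → ℝ) y) := by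
    intro x y
    simp [PiLp.inner_apply, dotProduct, RCLike.inner_apply, conj_trivial, mul_comm]
  -- verify the Rayleigh bound on U
  have hv : ∀ x ∈ U, (d i / c ^ 2) * ⟪x, x⟫ ≤ ⟪x, Matrix.toEuclideanLin M x⟫ := by
    intro x hx
    set y : Fin k → ℝ := WithLp.equiv 2 (Fin k → ℝ) x with hy
    set z : Fin k → ℝ := W *ᵥ y with hz
    have hz0 : ∀ j : Fin k, i < j → z j = 0 := hmem x hx
    have h1 : z ⬝ᵥ (Λ *ᵥ z) ≤ y ⬝ᵥ (M *ᵥ y) := hq y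
    have h2 : d i * (z ⬝ᵥ z) ≤ z ⬝ᵥ (Λ *ᵥ z) := by
      rw [hdiag]
      have hzz : z ⬝ᵥ z = ∑ j, (z j) ^ 2 := by
        simp [dotProduct, sq]
      rw [hzz, Finset.mul_sum]
      refine Finset.sum_le_sum fun j _ => ?_
      rcases lt_or_ge i j with hij | hij
      · simp [hz0 j hij]
      · exact mul_le_mul_of_nonneg_right (hdmono j i hij) (sq_nonneg _)
    have h3 : y ⬝ᵥ y ≤ c ^ 2 * (z ⬝ᵥ z) := by
      set zE : EuclideanSpace ℝ (Fin k) := (WithLp.equiv 2 (Fin k → ℝ)).symm z with hzE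
      have hxf : f zE = x := by
        apply (WithLp.equiv 2 (Fin k → ℝ)).injective
        simp [hf, Matrix.toEuclideanLin_apply, hzE, hz, Matrix.mulVec_mulVec, hW'W,
          Matrix.one_mulVec, hy]
      have hnx : ‖x‖ ≤ c * ‖zE‖ := hxf ▸ hfb zE
      have hyy : y ⬝ᵥ y = ‖x‖ ^ 2 := by
        rw [← real_inner_self_eq_norm_sq, hip x x]
      have hzz : z ⬝ᵥ z = ‖zE‖ ^ 2 := by
        rw [← real_inner_self_eq_norm_sq, hip zE zE]
        simp [hzE]
      rw [hyy, hzz]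
      calc ‖x‖ ^ 2 ≤ (c * ‖zE‖) ^ 2 := by
            apply pow_le_pow_left₀ (norm_nonneg _) hnx
        _ = c ^ 2 * ‖zE‖ ^ 2 := by ring
    have hMx : ⟪x, Matrix.toEuclideanLin M x⟫ = y ⬝ᵥ (M *ᵥ y) := by
      rw [hip x (Matrix.toEuclideanLin M x)]
      simp [Matrix.toEuclideanLin_apply, hy]
    have hxx : ⟪x, x⟫ = y ⬝ᵥ y := hip x x
    rw [hMx, hxx]
    have hdiv : 0 ≤ d i / c ^ 2 := div_nonneg (hd0 i) (sq_nonneg c)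
    calc (d i / c ^ 2) * (y ⬝ᵥ y) ≤ (d i / c ^ 2) * (c ^ 2 * (z ⬝ᵥ z)) :=
          mul_le_mul_of_nonneg_left h3 hdiv
      _ = d i * (z ⬝ᵥ z) := by
          field_simp
      _ ≤ z ⬝ᵥ (Λ *ᵥ z) := h2
      _ ≤ y ⬝ᵥ (M *ᵥ y) := h1
  have hmain := courant_min hSKS i U hU (d i / c ^ 2) hv
  rw [div_le_iff₀ (by positivity)] at hmain
  calc d i ≤ eigsDesc hSKS i * c ^ 2 := hmain
    _ = c ^ 2 * eigsDesc hSKS i := by ring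
end

section
/- Let K be an n×n real symmetric positive semidefinite matrix, η > 0, 1 ≤ k < n, and f ≥ 1. Let V_k ∈ ℝ^{n×k} have as columns orthonormal eigenvectors of K associated with the k largest eigenvalues λ_1(K), …, λ_k(K). If S ∈ ℝ^{n×k} is a selection operator such that V_k^T S is invertible and ‖(V_k^T S)^{-1}‖_2^2 ≤ 1 + f^2 k(n−k) (the guarantee provided by strong rank-revealing QR applied to V_k^T), then logdet(I_k + η^{-2} S^T K S) ≥ Σ_{i=1}^k log(1 + η^{-2} λ_i(K) / (1 + f^2 k(n−k))). -/
open Matrix BigOperators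

lemma real_conjT {a b : ℕ} (A : Matrix (Fin a) (Fin b) ℝ) : Aᴴ = Aᵀ := by
  ext i j; simp [Matrix.conjTranspose_apply]

lemma psd_smul {m : ℕ} {M : Matrix (Fin m) (Fin m) ℝ} (hM : M.PosSemidef)
    {c : ℝ} (hc : 0 ≤ c) : (c • M).PosSemidef := by
  refine .of_dotProduct_mulVec_nonneg ?_ fun x => ?_
  · unfold Matrix.IsHermitian
    rw [conjTranspose_smul, hM.1]
    simp
  · rw [smul_mulVec, dotProduct_smul, smul_eq_mul]
    exact mul_nonneg hc (hM.dotProduct_mulVec_nonneg x)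

lemma aux_one_le_det_one_add {m : ℕ} {M : Matrix (Fin m) (Fin m) ℝ}
    (hM : M.PosSemidef) : 1 ≤ (1 + M).det := by
  have h1 : (1 + M).PosSemidef := Matrix.PosSemidef.one.add hM
  have hH : (1 + M).IsHermitian := h1.isHermitian
  have hdet := hH.det_eq_prod_eigenvalues
  rw [hdet]
  refine le_trans (le_of_eq (Finset.prod_const_one).symm)
    (Finset.prod_le_prod (fun i _ => zero_le_one) fun i _ => ?_)
  simp only [RCLike.ofReal_real_eq_id, id_eq]
  have hv := hH.eigenvalues_eq i
  set v : EuclideanSpace ℝ (Fin m) := hH.eigenvectorBasis i with hvdef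
  have hvv : dotProduct (star ⇑v) ⇑v = 1 := by
    have hnorm : ‖v‖ = 1 := hH.eigenvectorBasis.orthonormal.1 i
    have : (inner ℝ v v : ℝ) = 1 := by
      rw [real_inner_self_eq_norm_sq, hnorm]; norm_num
    rw [← this, PiLp.inner_apply]
    simp [dotProduct, mul_comm, pow_two]
  have hexp : dotProduct (star ⇑v) ((1 + M) *ᵥ ⇑v)
      = dotProduct (star ⇑v) ⇑v + dotProduct (star ⇑v) (M *ᵥ ⇑v) := by
    rw [add_mulVec, one_mulVec, dotProduct_add]
  have hpos : 0 ≤ dotProduct (star ⇑v) (M *ᵥ ⇑v) := hM.dotProduct_mulVec_nonneg _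
  rw [hv]
  simp only [RCLike.re_to_real, hexp, hvv]
  linarith

open scoped MatrixOrder in
lemma aux_det_le {m : ℕ} {P N : Matrix (Fin m) (Fin m) ℝ}
    (hP : P.PosDef) (hN : N.PosSemidef) : P.det ≤ (P + N).det := by
  set Q := CFC.sqrt P with hQdef
  have hQpsd : Q.PosSemidef := (CFC.sqrt_nonneg P).posSemidef
  have hQQ : Q * Q = P := CFC.sqrt_mul_sqrt_self P hP.posSemidef.nonneg
  have hdetP : 0 < P.det := hP.det_pos
  have hdetQ : Q.det ≠ 0 := by
    intro h
    rw [← hQQ, det_mul, h, mul_zero] at hdetP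
    exact lt_irrefl _ hdetP
  have hQinv : Q * Q⁻¹ = 1 := mul_nonsing_inv Q (isUnit_iff_ne_zero.mpr hdetQ)
  have hQinv' : Q⁻¹ * Q = 1 := nonsing_inv_mul Q (isUnit_iff_ne_zero.mpr hdetQ)
  have hQH : Qᴴ = Q := hQpsd.isHermitian
  have hMpsd : (Q⁻¹ * N * Q⁻¹).PosSemidef := by
    have : (Q⁻¹)ᴴ = Q⁻¹ := by rw [conjTranspose_nonsing_inv, hQH]
    have h := hN.conjTranspose_mul_mul_same (B := Q⁻¹)
    rwa [this] at h
  have hfact : P + N = Q * (1 + Q⁻¹ * N * Q⁻¹) * Q := by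
    rw [mul_add, mul_one, add_mul, hQQ]
    congr 1
    symm
    calc Q * (Q⁻¹ * N * Q⁻¹) * Q = (Q * Q⁻¹) * (N * (Q⁻¹ * Q)) := by
          simp only [Matrix.mul_assoc]
      _ = N := by rw [hQinv, hQinv', one_mul, mul_one]
  rw [hfact, det_mul, det_mul]
  have h1 : 1 ≤ (1 + Q⁻¹ * N * Q⁻¹).det := aux_one_le_det_one_add hMpsd
  have hdQ : 0 < Q.det * Q.det := by rw [← det_mul, hQQ]; exact hdetP
  calc P.det = Q.det * 1 * Q.det := by rw [mul_one, ← det_mul, hQQ]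
    _ ≤ Q.det * (1 + Q⁻¹ * N * Q⁻¹).det * Q.det := by nlinarith

lemma specNorm_transpose {a b : ℕ} (A : Matrix (Fin a) (Fin b) ℝ) :
    specNorm Aᵀ = specNorm A := by
  unfold specNorm
  rw [← real_conjT, Matrix.toEuclideanLin_conjTranspose_eq_adjoint,
    LinearMap.adjoint_toContinuousLinearMap]
  exact ContinuousLinearMap.adjoint.norm_map _

lemma specNorm_mulVec_le {a b : ℕ} (A : Matrix (Fin a) (Fin b) ℝ)
    (x : EuclideanSpace ℝ (Fin b)) :
    ‖(WithLp.equiv 2 _).symm (A *ᵥ (WithLp.equiv 2 _ x))‖ ≤ specNorm A * ‖x‖ := by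
  have := (LinearMap.toContinuousLinearMap (Matrix.toEuclideanLin A)).le_opNorm x
  simpa [Matrix.toEuclideanLin_apply, specNorm] using this

lemma dot_self_eq_norm_sq {a : ℕ} (v : Fin a → ℝ) :
    v ⬝ᵥ v = ‖(WithLp.equiv 2 (Fin a → ℝ)).symm v‖ ^ 2 := by
  rw [EuclideanSpace.norm_eq, Real.sq_sqrt (by positivity)]
  simp [dotProduct, pow_two]

lemma aux_WWT {κ : ℕ} {W : Matrix (Fin κ) (Fin κ) ℝ} (hW : IsUnit W.det)
    {c : ℝ} (hc : 0 < c) (h : specNorm W⁻¹ ^ 2 ≤ c) :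
    (W * Wᵀ - c⁻¹ • (1 : Matrix (Fin κ) (Fin κ) ℝ)).PosSemidef := by
  refine Matrix.PosSemidef.of_dotProduct_mulVec_nonneg ?_ ?_
  · show _ = _
    rw [real_conjT, transpose_sub, transpose_mul, transpose_transpose,
      transpose_smul, transpose_one]
  · intro x
    rw [star_trivial, sub_mulVec, dotProduct_sub, ← mulVec_mulVec,
      dotProduct_mulVec, ← mulVec_transpose, smul_mulVec, one_mulVec,
      dotProduct_smul, smul_eq_mul]
    set y := Wᵀ *ᵥ x with hy
    have hxy : (W⁻¹)ᵀ *ᵥ y = x := by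
      rw [hy, mulVec_mulVec, transpose_nonsing_inv,
        nonsing_inv_mul _ (by rwa [det_transpose]), one_mulVec]
    have hX : x ⬝ᵥ x ≤ c * (y ⬝ᵥ y) := by
      rw [dot_self_eq_norm_sq, dot_self_eq_norm_sq]
      have hnb := specNorm_mulVec_le ((W⁻¹)ᵀ) ((WithLp.equiv 2 (Fin κ → ℝ)).symm y)
      rw [Equiv.apply_symm_apply, hxy, specNorm_transpose] at hnb
      have h0 : (0:ℝ) ≤ ‖(WithLp.equiv 2 (Fin κ → ℝ)).symm x‖ := norm_nonneg _
      have h1 : (0:ℝ) ≤ specNorm W⁻¹ := by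
        have := norm_nonneg (LinearMap.toContinuousLinearMap (Matrix.toEuclideanLin W⁻¹))
        exact this
      nlinarith [norm_nonneg ((WithLp.equiv 2 (Fin κ → ℝ)).symm y), sq_nonneg (specNorm W⁻¹)]
    have hyy : 0 ≤ y ⬝ᵥ y := by
      simpa [star_trivial] using dotProduct_star_self_nonneg (R := ℝ) y
    have := mul_le_mul_of_nonneg_left hX (le_of_lt (inv_pos.mpr hc))
    rw [← mul_assoc, inv_mul_cancel₀ (ne_of_gt hc), one_mul] at this
    linarith

/-- Corollary 3.2: D-optimality guarantee of GKS with
strong rank-revealing QR, `‖(VₖᵀS)⁻¹‖₂² ≤ 1 + f²k(n−k)` yields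
`logdet(I + η⁻²SᵀKS) ≥ ∑ log(1 + η⁻²λᵢ(K)/(1 + f²k(n−k)))`. -/
theorem stmt_3 {n k : ℕ} (hk : 1 ≤ k) (hkn : k < n)
    {K : Matrix (Fin n) (Fin n) ℝ} (hK : K.PosSemidef)
    {η : ℝ} (hη : 0 < η) {f : ℝ} (hf : 1 ≤ f)
    (Vk : Matrix (Fin n) (Fin k) ℝ)
    (hVk_orth : Vkᵀ * Vk = 1)
    (hVk_eig : K * Vk =
      Vk * Matrix.diagonal (fun j : Fin k =>
        eigsDesc hK.isHermitian (Fin.castLE hkn.le j)))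
    (S : Matrix (Fin n) (Fin k) ℝ) (hS : IsSelection S)
    (hinv : IsUnit (Vkᵀ * S).det)
    (hnorm : specNorm ((Vkᵀ * S)⁻¹) ^ 2 ≤ 1 + f ^ 2 * k * (n - k : ℝ)) :
    ∑ i : Fin k, Real.log (1 + η⁻¹ ^ 2 * eigsDesc hK.isHermitian (Fin.castLE hkn.le i)
        / (1 + f ^ 2 * k * (n - k : ℝ)))
      ≤ Real.log ((1 + η⁻¹ ^ 2 • (Sᵀ * K * S)).det) := by
  classical
  set μ : Fin k → ℝ := fun j => eigsDesc hK.isHermitian (Fin.castLE hkn.le j) with hμdef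
  have hμ : ∀ j, 0 ≤ μ j := by
    intro j
    simp only [hμdef, eigsDesc, Function.comp]
    exact hK.eigenvalues_nonneg _
  set c : ℝ := 1 + f ^ 2 * k * (n - k : ℝ) with hcdef
  have hnk : (1:ℝ) ≤ (n - k : ℝ) := by
    have : (k:ℝ) + 1 ≤ (n:ℝ) := by exact_mod_cast hkn
    linarith
  have hc1 : (1:ℝ) ≤ c := by
    have hf2 : (1:ℝ) ≤ f ^ 2 := by nlinarith
    have hk1 : (1:ℝ) ≤ (k:ℝ) := by exact_mod_cast hk
    rw [hcdef]
    have ha : (1:ℝ) ≤ f ^ 2 * k := by nlinarith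
    have hb : (1:ℝ) ≤ f ^ 2 * k * (n - k : ℝ) := by nlinarith
    linarith
  have hc : 0 < c := lt_of_lt_of_le one_pos hc1
  set r : ℝ := η⁻¹ ^ 2 with hrdef
  have hr : 0 < r := by positivity
  set Λ : Matrix (Fin k) (Fin k) ℝ := Matrix.diagonal μ with hΛdef
  have hΛ : Λ.PosSemidef := Matrix.PosSemidef.diagonal hμ
  set R : Matrix (Fin k) (Fin k) ℝ := Matrix.diagonal (fun i => Real.sqrt (μ i)) with hRdef
  have hRR : R * R = Λ := by
    rw [hRdef, diagonal_mul_diagonal, hΛdef]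
    have : (fun i => Real.sqrt (μ i) * Real.sqrt (μ i)) = μ :=
      funext fun i => Real.mul_self_sqrt (hμ i)
    rw [this]
  have hRT : Rᵀ = R := diagonal_transpose _
  have hKsymm : Kᵀ = K := by rw [← real_conjT]; exact hK.isHermitian
  have hVkT : Vkᵀ * K = Λ * Vkᵀ := by
    have h := congrArg Matrix.transpose hVk_eig
    rw [transpose_mul, transpose_mul, hKsymm, diagonal_transpose] at h
    exact h
  set P : Matrix (Fin n) (Fin n) ℝ := Vk * Vkᵀ with hPdef
  have hPK : P * K = Vk * Λ * Vkᵀ := by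
    calc P * K = Vk * (Vkᵀ * K) := by rw [hPdef, Matrix.mul_assoc]
      _ = Vk * Λ * Vkᵀ := by rw [hVkT, Matrix.mul_assoc]
  have hKP : K * P = Vk * Λ * Vkᵀ := by
    calc K * P = (K * Vk) * Vkᵀ := by rw [hPdef, Matrix.mul_assoc]
      _ = Vk * Λ * Vkᵀ := by rw [hVk_eig]
  have hPKP : P * K * P = Vk * Λ * Vkᵀ := by
    rw [hPK, hPdef]
    calc Vk * Λ * Vkᵀ * (Vk * Vkᵀ) = Vk * Λ * (Vkᵀ * Vk) * Vkᵀ := by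
          simp only [Matrix.mul_assoc]
      _ = Vk * Λ * Vkᵀ := by rw [hVk_orth, Matrix.mul_one]
  set N : Matrix (Fin n) (Fin n) ℝ := K - Vk * Λ * Vkᵀ with hNdef
  have hNfact : N = (1 - P) * K * (1 - P) := by
    have expand : (1 - P) * K * (1 - P) = K - P * K - K * P + P * K * P := by
      noncomm_ring
    rw [hNdef, expand, hPKP, hPK, hKP]
    abel
  have hNpsd : N.PosSemidef := by
    have hPT : (1 - P)ᴴ = 1 - P := by
      rw [real_conjT, transpose_sub, transpose_one, hPdef, transpose_mul,
        transpose_transpose]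
    have h := hK.conjTranspose_mul_mul_same (B := 1 - P)
    rw [hPT] at h
    rwa [hNfact]
  set W : Matrix (Fin k) (Fin k) ℝ := Vkᵀ * S with hWdef
  have hWT : Wᵀ = Sᵀ * Vk := by rw [hWdef, transpose_mul, transpose_transpose]
  have hsplit : Sᵀ * K * S = Wᵀ * Λ * W + Sᵀ * N * S := by
    rw [hWT, hWdef, hNdef]
    simp only [Matrix.mul_sub, Matrix.sub_mul, Matrix.mul_assoc]
    abel
  have hSNS : (Sᵀ * N * S).PosSemidef := by
    have h := hNpsd.conjTranspose_mul_mul_same (B := S)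
    rwa [real_conjT] at h
  have hWΛW : (Wᵀ * Λ * W).PosSemidef := by
    have h := hΛ.conjTranspose_mul_mul_same (B := W)
    rwa [real_conjT] at h
  -- the diagonal lower-bound matrix
  have hdiagdet : (1 + (r * c⁻¹) • Λ).det = ∏ i, (1 + r * μ i / c) := by
    have : (1 : Matrix (Fin k) (Fin k) ℝ) + (r * c⁻¹) • Λ
        = Matrix.diagonal (fun i => 1 + (r * c⁻¹) * μ i) := by
      rw [hΛdef, ← diagonal_smul, ← diagonal_one, diagonal_add]
      rfl
    rw [this, det_diagonal]
    congr 1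
    funext i
    rw [div_eq_mul_inv]
    ring
  have hdiagPD : ((1 : Matrix (Fin k) (Fin k) ℝ) + (r * c⁻¹) • Λ).PosDef :=
    Matrix.PosDef.one.add_posSemidef
      (psd_smul hΛ (by positivity))
  -- step 1 : diag ≤ det (1 + r • (Wᵀ * Λ * W))
  have hWWT : (W * Wᵀ - c⁻¹ • (1 : Matrix (Fin k) (Fin k) ℝ)).PosSemidef :=
    aux_WWT hinv hc hnorm
  have hstep1 : ((1 : Matrix (Fin k) (Fin k) ℝ) + (r * c⁻¹) • Λ).det
      ≤ (1 + r • (Wᵀ * Λ * W)).det := by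
    have hsyl : ((1 : Matrix (Fin k) (Fin k) ℝ) + r • (Wᵀ * Λ * W)).det
        = (1 + r • (R * (W * Wᵀ) * R)).det := by
      have e1 : r • (Wᵀ * Λ * W) = (r • (Wᵀ * R)) * (R * W) := by
        rw [← hRR]
        rw [Matrix.smul_mul]
        congr 1
        simp only [Matrix.mul_assoc]
      have e2 : (R * W) * (r • (Wᵀ * R)) = r • (R * (W * Wᵀ) * R) := by
        rw [Matrix.mul_smul]
        congr 1
        simp only [Matrix.mul_assoc]
      rw [e1, det_one_add_mul_comm, e2]
    rw [hsyl]
    have key : R * (W * Wᵀ) * R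
        = c⁻¹ • Λ + R * (W * Wᵀ - c⁻¹ • 1) * R := by
      rw [Matrix.mul_sub, Matrix.sub_mul, Matrix.mul_smul, Matrix.smul_mul,
        Matrix.mul_one, hRR]
      abel
    have hdecomp : (1 : Matrix (Fin k) (Fin k) ℝ) + r • (R * (W * Wᵀ) * R)
        = (1 + (r * c⁻¹) • Λ) + r • (R * (W * Wᵀ - c⁻¹ • 1) * R) := by
      rw [key, smul_add, smul_smul, ← add_assoc]
    rw [hdecomp]
    refine aux_det_le hdiagPD ?_
    refine psd_smul ?_ (le_of_lt hr)
    have h := hWWT.conjTranspose_mul_mul_same (B := R)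
    rwa [real_conjT, hRT] at h
  -- step 2
  have hstep2 : ((1 : Matrix (Fin k) (Fin k) ℝ) + r • (Wᵀ * Λ * W)).det
      ≤ (1 + r • (Sᵀ * K * S)).det := by
    have : (1 : Matrix (Fin k) (Fin k) ℝ) + r • (Sᵀ * K * S)
        = (1 + r • (Wᵀ * Λ * W)) + r • (Sᵀ * N * S) := by
      rw [hsplit, smul_add, add_assoc]
    rw [this]
    exact aux_det_le
      (Matrix.PosDef.one.add_posSemidef (psd_smul hWΛW (le_of_lt hr)))
      (psd_smul hSNS (le_of_lt hr))
  -- conclude with logs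
  have hterm : ∀ i : Fin k, 0 < 1 + r * μ i / c := by
    intro i
    have : 0 ≤ r * μ i / c := div_nonneg (mul_nonneg hr.le (hμ i)) hc.le
    linarith
  have hprodpos : 0 < ∏ i, (1 + r * μ i / c) :=
    Finset.prod_pos fun i _ => hterm i
  have hlhs : ∑ i : Fin k, Real.log (1 + r * μ i / c)
      = Real.log (∏ i, (1 + r * μ i / c)) := by
    rw [Real.log_prod]
    intro i _
    exact ne_of_gt (hterm i)
  have hfinal : (∏ i, (1 + r * μ i / c)) ≤ ((1 + r • (Sᵀ * K * S)).det) := by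
    rw [← hdiagdet]
    exact le_trans hstep1 hstep2
  rw [hlhs]
  exact Real.log_le_log hprodpos hfinal
end

section
/- Let R ∈ ℝ^{n×n} be upper triangular with diagonal entries r_{11} ≥ r_{22} ≥ … ≥ r_{nn} and with |r_{sj}| ≤ r_{ss} for all 1 ≤ s ≤ j ≤ n. Fix 1 ≤ i ≤ n with r_{ii} > 0. Then the i-th largest eigenvalue of R^T R satisfies λ_i(R^T R) ≥ r_{ii}^2 / 4^{i−1}. -/
open Matrix BigOperators

open Finset
open scoped RealInnerProductSpace

lemma card_le_subtype {n : ℕ} (m : Fin n) :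
    Fintype.card {k : Fin n // k ≤ m} = m.val + 1 := by
  have e : {k : Fin n // k ≤ m} ≃ Fin (m.val + 1) :=
    { toFun := fun k => ⟨k.1.val, by have := k.2; rw [Fin.le_def] at this; omega⟩
      invFun := fun j => ⟨⟨j.val, by have := j.isLt; have := m.isLt; omega⟩, by
        rw [Fin.le_def]; have := j.isLt; simpa using by omega⟩
      left_inv := fun k => by ext; rfl
      right_inv := fun j => by ext; rfl }
  rw [Fintype.card_congr e, Fintype.card_fin]

lemma quad_form_le_eigsDesc {n : ℕ} {A : Matrix (Fin n) (Fin n) ℝ} (hA : A.IsHermitian)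
    (i : Fin n) (μ : ℝ) (W : Submodule ℝ (EuclideanSpace ℝ (Fin n)))
    (hW : i.val + 1 ≤ Module.finrank ℝ W)
    (hq : ∀ x ∈ W, μ * ‖x‖^2 ≤ ⟪x, Matrix.toEuclideanLin A x⟫) :
    μ ≤ eigsDesc hA i := by
  by_contra hlt
  push_neg at hlt
  set σ := Tuple.sort hA.eigenvalues with hσ
  set c : OrthonormalBasis (Fin n) ℝ (EuclideanSpace ℝ (Fin n)) :=
    hA.eigenvectorBasis.reindex σ.symm with hc
  have hcj : ∀ j, c j = hA.eigenvectorBasis (σ j) := fun j => by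
    simp [hc, OrthonormalBasis.reindex_apply]
  have hAc : ∀ j, Matrix.toEuclideanLin A (c j) = hA.eigenvalues (σ j) • c j := by
    intro j
    rw [hcj]
    ext k
    have h1 := congrFun (hA.mulVec_eigenvectorBasis (σ j)) k
    simpa [Matrix.toEuclideanLin_apply] using h1
  set m := i.rev with hm
  set f : {k : Fin n // k ≤ m} → EuclideanSpace ℝ (Fin n) := fun k => c k.1 with hf
  have hfli : LinearIndependent ℝ f :=
    c.orthonormal.linearIndependent.comp _ Subtype.val_injective
  set U := Submodule.span ℝ (Set.range f) with hU
  have hUrank : Module.finrank ℝ U = m.val + 1 := by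
    rw [hU, finrank_span_eq_card hfli, card_le_subtype]
  have hmval : m.val = n - 1 - i.val := by
    rw [hm, Fin.val_rev]; omega
  have hilt : i.val < n := i.isLt
  have hEn : Module.finrank ℝ (EuclideanSpace ℝ (Fin n)) = n := by
    simp [finrank_euclideanSpace]
  have hinf : ∃ x : EuclideanSpace ℝ (Fin n), x ∈ U ⊓ W ∧ x ≠ 0 := by
    have h1 := Submodule.finrank_sup_add_finrank_inf_eq U W
    have h2 : Module.finrank ℝ ↥(U ⊔ W) ≤ n := by
      exact (Submodule.finrank_le _).trans (le_of_eq hEn)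
    have h3 : 0 < Module.finrank ℝ ↥(U ⊓ W) := by omega
    obtain ⟨x, hx0⟩ := Module.finrank_pos_iff_exists_ne_zero.mp h3
    exact ⟨x.1, x.2, fun h => hx0 (Subtype.ext h)⟩
  obtain ⟨x, hxmem, hxne⟩ := hinf
  -- coefficients beyond m vanish
  have hker : ∀ j : Fin n, m < j → ⟪c j, x⟫ = 0 := by
    intro j hj
    have hle : U ≤ LinearMap.ker (innerSL ℝ (c j)).toLinearMap := by
      rw [hU, Submodule.span_le]
      rintro _ ⟨k, rfl⟩
      simp only [SetLike.mem_coe, LinearMap.mem_ker, ContinuousLinearMap.coe_coe, innerSL_apply_apply]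
      have hne : j ≠ k.1 := fun h => absurd (h ▸ k.2) (not_le.mpr hj)
      exact c.orthonormal.2 hne
    have := hle hxmem.1
    simpa using this
  have hnormsq : ‖x‖^2 = ∑ j, ⟪c j, x⟫^2 := by
    have h1 := c.sum_inner_mul_inner x x
    have h2 : ∀ j : Fin n, ⟪x, c j⟫ * ⟪c j, x⟫ = ⟪c j, x⟫^2 := by
      intro j; rw [real_inner_comm x (c j)]; ring
    rw [← real_inner_self_eq_norm_sq, ← h1]
    exact Finset.sum_congr rfl (fun j _ => h2 j)
  have hquad : ⟪x, Matrix.toEuclideanLin A x⟫ = ∑ j, hA.eigenvalues (σ j) * ⟪c j, x⟫^2 := by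
    rw [← c.sum_inner_mul_inner x (Matrix.toEuclideanLin A x)]
    refine Finset.sum_congr rfl fun j _ => ?_
    have hsym : ⟪c j, Matrix.toEuclideanLin A x⟫ = ⟪Matrix.toEuclideanLin A (c j), x⟫ :=
      ((Matrix.isHermitian_iff_isSymmetric.mp hA) (c j) x).symm
    rw [hsym, hAc j, real_inner_smul_left, real_inner_comm x (c j)]
    ring
  have hmono : ∀ j : Fin n, j ≤ m → hA.eigenvalues (σ j) ≤ eigsDesc hA i := by
    intro j hj
    have := Tuple.monotone_sort hA.eigenvalues hj
    simpa [eigsDesc, hσ, hm, Function.comp] using this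
  have hbound : ⟪x, Matrix.toEuclideanLin A x⟫ ≤ eigsDesc hA i * ‖x‖^2 := by
    rw [hquad, hnormsq, Finset.mul_sum]
    refine Finset.sum_le_sum fun j _ => ?_
    rcases le_or_gt j m with h | h
    · exact mul_le_mul_of_nonneg_right (hmono j h) (sq_nonneg _)
    · rw [hker j h]; simp
  have hxW := hq x hxmem.2
  have hxn : 0 < ‖x‖^2 := by
    have : ‖x‖ ≠ 0 := norm_ne_zero_iff.mpr hxne
    positivity
  nlinarith [hxW, hbound, hlt, hxn]


lemma geomIoc (k b : ℕ) : ∑ j ∈ Finset.Ioc k b, (2:ℝ)^(j-k-1) = 2^(b-k) - 1 := by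
  rcases le_or_gt k b with h | h
  · induction b with
    | zero => interval_cases k <;> simp
    | succ b ih =>
      rcases Nat.lt_or_ge k (b+1) with h2 | h2
      · have hkb : k ≤ b := by omega
        rw [Finset.sum_Ioc_succ_top hkb, ih hkb]
        have h4 : (2:ℝ)^(b+1-k) = 2^(b-k) * 2 := by
          rw [← pow_succ]; congr 1; omega
        have h3 : b + 1 - k - 1 = b - k := by omega
        rw [h3, h4]; ring
      · have : k = b + 1 := by omega
        subst this; simp
  · rw [Finset.Ioc_eq_empty (by omega)]
    have : b - k = 0 := by omega
    simp [this]

lemma geomIoo (k l : ℕ) (h : k < l) :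
    ∑ j ∈ Finset.Ioo k l, (2:ℝ)^(l-j-1) = 2^(l-k-1) - 1 := by
  have heq : ∑ j ∈ Finset.Ioo k l, (2:ℝ)^(l-j-1) = ∑ j ∈ Finset.Ioo k l, (2:ℝ)^(j-k-1) := by
    refine Finset.sum_nbij' (fun j => k + l - j) (fun j => k + l - j) ?_ ?_ ?_ ?_ ?_ <;>
      intro a ha <;> simp only [Finset.mem_Ioo] at ha ⊢ <;>
        first | omega | (congr 1; omega)
  have hset : Finset.Ioo k l = Finset.Ioc k (l-1) := by
    ext j; simp only [Finset.mem_Ioo, Finset.mem_Ioc]; omega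
  rw [heq, hset, geomIoc]
  congr 2
  omega

lemma geomIio (j : ℕ) : ∑ k ∈ Finset.range j, (2:ℝ)^(j-k-1) = 2^j - 1 := by
  have h1 := Finset.sum_range_reflect (fun k => (2:ℝ)^(j-k-1)) j
  rw [← h1]
  have h2 : ∀ k ∈ Finset.range j, (2:ℝ)^(j-(j-1-k)-1) = 2^k := by
    intro k hk; rw [Finset.mem_range] at hk; congr 1; omega
  rw [Finset.sum_congr rfl h2, geom_sum_eq (by norm_num : (2:ℝ) ≠ 1)]
  norm_num

lemma tri_bound {n : ℕ} (R : Matrix (Fin n) (Fin n) ℝ)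
    (htri : ∀ i j : Fin n, j < i → R i j = 0)
    (hdiag_mono : ∀ i j : Fin n, i ≤ j → R j j ≤ R i i)
    (hdom : ∀ s j : Fin n, s ≤ j → |R s j| ≤ R s s)
    (i : Fin n) (hpos : 0 < R i i)
    (x : Fin n → ℝ) (hx : ∀ j : Fin n, i < j → x j = 0) :
    (R i i)^2 / 4^i.val * (∑ j, (x j)^2) ≤ ∑ k, ((R *ᵥ x) k)^2 := by
  classical
  set y : Fin n → ℝ := R *ᵥ x with hy
  set X : ℕ → ℝ := fun mN => if h : mN < n then |x ⟨mN, h⟩| else 0 with hX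
  set V : ℕ → ℝ := fun mN => if h : mN < n then |y ⟨mN, h⟩| / R i i else 0 with hV
  have Xnn : ∀ mN, 0 ≤ X mN := by
    intro mN; rw [hX]; dsimp only; split <;> positivity
  have Vnn : ∀ mN, 0 ≤ V mN := by
    intro mN; rw [hV]; dsimp only; split
    · positivity
    · exact le_refl 0
  have hXval : ∀ k : Fin n, X k.val = |x k| := by
    intro k; rw [hX]; dsimp only; rw [dif_pos k.isLt]
  have hVval : ∀ k : Fin n, V k.val = |y k| / R i i := by
    intro k; rw [hV]; dsimp only; rw [dif_pos k.isLt]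
  -- the Fin-level recurrence
  have hrecF : ∀ k : Fin n, k ≤ i →
      R k k * |x k| ≤ |y k| + R k k * ∑ j ∈ Finset.Ioc k i, |x j| := by
    intro k hk
    have hRkk : 0 < R k k := lt_of_lt_of_le hpos (hdiag_mono k i hk)
    have hyk : y k = R k k * x k + ∑ j ∈ Finset.Ioc k i, R k j * x j := by
      have h1 : y k = ∑ j, R k j * x j := rfl
      rw [h1, ← Finset.sum_subset (Finset.subset_univ (Finset.Icc k i))]
      · rw [Finset.Icc_eq_cons_Ioc hk, Finset.sum_cons]
      · intro j _ hj
        rw [Finset.mem_Icc] at hj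
        push_neg at hj
        rcases le_or_gt k j with h | h
        · rw [hx j (hj h)]; ring
        · rw [htri k j h]; ring
    have habs : |R k k * x k| ≤ |y k| + ∑ j ∈ Finset.Ioc k i, |R k j * x j| := by
      have heq : R k k * x k = y k - ∑ j ∈ Finset.Ioc k i, R k j * x j := by
        rw [hyk]; ring
      rw [heq]
      calc |y k - ∑ j ∈ Finset.Ioc k i, R k j * x j|
          ≤ |y k| + |∑ j ∈ Finset.Ioc k i, R k j * x j| := abs_sub _ _
        _ ≤ |y k| + ∑ j ∈ Finset.Ioc k i, |R k j * x j| := by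
            gcongr
            exact Finset.abs_sum_le_sum_abs _ _
    have hterm : ∀ j ∈ Finset.Ioc k i, |R k j * x j| ≤ R k k * |x j| := by
      intro j hj
      rw [Finset.mem_Ioc] at hj
      rw [abs_mul]
      exact mul_le_mul_of_nonneg_right (hdom k j (le_of_lt hj.1)) (abs_nonneg _)
    calc R k k * |x k| = |R k k * x k| := by rw [abs_mul, abs_of_pos hRkk]
      _ ≤ |y k| + ∑ j ∈ Finset.Ioc k i, |R k j * x j| := habs
      _ ≤ |y k| + ∑ j ∈ Finset.Ioc k i, R k k * |x j| := by
          gcongr with j hj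
          exact hterm j hj
      _ = |y k| + R k k * ∑ j ∈ Finset.Ioc k i, |x j| := by rw [Finset.mul_sum]
  -- conversion of Fin sums over Ioc to ℕ sums
  have hconv : ∀ (k : Fin n) (g : ℕ → ℝ),
      ∑ jN ∈ Finset.Ioc k.val i.val, g jN = ∑ j ∈ Finset.Ioc k i, g j.val := by
    intro k g
    rw [← Fin.map_valEmbedding_Ioc, Finset.sum_map]
    rfl
  -- the ℕ-level recurrence
  have hrecN : ∀ kN, kN ≤ i.val →
      X kN ≤ V kN + ∑ jN ∈ Finset.Ioc kN i.val, X jN := by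
    intro kN hkN
    have hkn : kN < n := lt_of_le_of_lt hkN i.isLt
    set k : Fin n := ⟨kN, hkn⟩ with hkdef
    have hk : k ≤ i := by rw [Fin.le_def]; exact hkN
    have hRkk : 0 < R k k := lt_of_lt_of_le hpos (hdiag_mono k i hk)
    have h1 := hrecF k hk
    have h2 : ∑ jN ∈ Finset.Ioc kN i.val, X jN = ∑ j ∈ Finset.Ioc k i, |x j| := by
      rw [show kN = k.val from rfl, hconv k X]
      exact Finset.sum_congr rfl fun j _ => hXval j
    rw [show kN = k.val from rfl, hXval k, hVval k, h2]
    have d1 : |x k| - ∑ j ∈ Finset.Ioc k i, |x j| ≤ |y k| / R k k := by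
      rw [le_div_iff₀ hRkk]
      nlinarith [h1]
    have d2 : |y k| / R k k ≤ |y k| / R i i :=
      div_le_div_of_nonneg_left (abs_nonneg _) hpos (hdiag_mono k i hk)
    linarith
  -- main inductive claim
  have hQ : ∀ d kN, kN ≤ i.val → i.val - kN ≤ d →
      X kN ≤ V kN + ∑ jN ∈ Finset.Ioc kN i.val, 2^(jN - kN - 1) * V jN := by
    intro d
    induction d with
    | zero =>
      intro kN hk hd
      have hki : kN = i.val := by omega
      subst hki
      simpa using hrecN i.val le_rfl
    | succ d ih =>
      intro kN hk hd
      have h1 := hrecN kN hk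
      have h2 : ∑ jN ∈ Finset.Ioc kN i.val, X jN ≤
          ∑ jN ∈ Finset.Ioc kN i.val,
            (V jN + ∑ lN ∈ Finset.Ioc jN i.val, 2^(lN - jN - 1) * V lN) := by
        refine Finset.sum_le_sum fun jN hj => ?_
        rw [Finset.mem_Ioc] at hj
        exact ih jN hj.2 (by omega)
      have h4 : ∑ jN ∈ Finset.Ioc kN i.val, ∑ lN ∈ Finset.Ioc jN i.val,
            (2:ℝ)^(lN - jN - 1) * V lN
          = ∑ lN ∈ Finset.Ioc kN i.val, ((2:ℝ)^(lN - kN - 1) - 1) * V lN := by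
        rw [Finset.sum_comm' (t' := Finset.Ioc kN i.val) (s' := fun lN => Finset.Ioo kN lN)
          (by intro jN lN
              simp only [Finset.mem_Ioc, Finset.mem_Ioo]
              omega)]
        refine Finset.sum_congr rfl fun lN hl => ?_
        rw [Finset.mem_Ioc] at hl
        rw [← Finset.sum_mul, geomIoo kN lN hl.1]
      have h5 : ∑ jN ∈ Finset.Ioc kN i.val,
            (V jN + ∑ lN ∈ Finset.Ioc jN i.val, 2^(lN - jN - 1) * V lN)
          = ∑ jN ∈ Finset.Ioc kN i.val, 2^(jN - kN - 1) * V jN := by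
        rw [Finset.sum_add_distrib, h4, ← Finset.sum_add_distrib]
        refine Finset.sum_congr rfl fun jN _ => ?_
        ring
      linarith [h1, h2.trans_eq h5]
  -- coefficient function
  set cf : ℕ → ℕ → ℝ := fun kN jN => if jN = kN then (1:ℝ) else 2^(jN - kN - 1) with hcf
  have cfnn : ∀ kN jN, 0 ≤ cf kN jN := by
    intro kN jN; rw [hcf]; dsimp only; split <;> positivity
  have hXcf : ∀ kN ∈ Finset.Iic i.val,
      X kN ≤ ∑ jN ∈ Finset.Icc kN i.val, cf kN jN * V jN := by
    intro kN hk
    rw [Finset.mem_Iic] at hk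
    have h1 := hQ (i.val - kN) kN hk le_rfl
    rw [Finset.Icc_eq_cons_Ioc hk, Finset.sum_cons]
    have h2 : ∑ jN ∈ Finset.Ioc kN i.val, cf kN jN * V jN
        = ∑ jN ∈ Finset.Ioc kN i.val, 2^(jN - kN - 1) * V jN := by
      refine Finset.sum_congr rfl fun jN hj => ?_
      rw [Finset.mem_Ioc] at hj
      rw [hcf]; dsimp only; rw [if_neg (by omega)]
    have h3 : cf kN kN = 1 := by rw [hcf]; dsimp only; rw [if_pos rfl]
    rw [h2, h3, one_mul]
    exact h1
  -- row sums
  have hrow : ∀ kN ∈ Finset.Iic i.val,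
      ∑ jN ∈ Finset.Icc kN i.val, cf kN jN ≤ 2^i.val := by
    intro kN hk
    rw [Finset.mem_Iic] at hk
    rw [Finset.Icc_eq_cons_Ioc hk, Finset.sum_cons]
    have h2 : ∑ jN ∈ Finset.Ioc kN i.val, cf kN jN
        = ∑ jN ∈ Finset.Ioc kN i.val, (2:ℝ)^(jN - kN - 1) := by
      refine Finset.sum_congr rfl fun jN hj => ?_
      rw [Finset.mem_Ioc] at hj
      rw [hcf]; dsimp only; rw [if_neg (by omega)]
    have h3 : cf kN kN = 1 := by rw [hcf]; dsimp only; rw [if_pos rfl]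
    rw [h2, h3, geomIoc]
    have h4 : (2:ℝ)^(i.val - kN) ≤ 2^i.val :=
      pow_le_pow_right₀ one_le_two (by omega)
    linarith
  -- column sums
  have hcol : ∀ jN ∈ Finset.Iic i.val,
      ∑ kN ∈ Finset.Iic jN, cf kN jN ≤ 2^i.val := by
    intro jN hj
    rw [Finset.mem_Iic] at hj
    have hIic : Finset.Iic jN = insert jN (Finset.range jN) := by
      ext a; simp only [Finset.mem_Iic, Finset.mem_insert, Finset.mem_range]; omega
    rw [hIic, Finset.sum_insert (by simp)]
    have h2 : ∑ kN ∈ Finset.range jN, cf kN jN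
        = ∑ kN ∈ Finset.range jN, (2:ℝ)^(jN - kN - 1) := by
      refine Finset.sum_congr rfl fun kN hk => ?_
      rw [Finset.mem_range] at hk
      rw [hcf]; dsimp only; rw [if_neg (by omega)]
    have h3 : cf jN jN = 1 := by rw [hcf]; dsimp only; rw [if_pos rfl]
    rw [h2, h3, geomIio]
    have h4 : (2:ℝ)^jN ≤ 2^i.val := pow_le_pow_right₀ one_le_two hj
    linarith
  -- Cauchy-Schwarz per row
  have hCS : ∀ kN ∈ Finset.Iic i.val,
      X kN ^ 2 ≤ 2^i.val * ∑ jN ∈ Finset.Icc kN i.val, cf kN jN * V jN ^ 2 := by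
    intro kN hk
    have h0 := hXcf kN hk
    have h1 : X kN ^ 2 ≤ (∑ jN ∈ Finset.Icc kN i.val, cf kN jN * V jN) ^ 2 := by
      have hXnn := Xnn kN
      nlinarith [h0]
    have h2 : (∑ jN ∈ Finset.Icc kN i.val, cf kN jN * V jN) ^ 2
        ≤ (∑ jN ∈ Finset.Icc kN i.val, cf kN jN)
          * ∑ jN ∈ Finset.Icc kN i.val, cf kN jN * V jN ^ 2 := by
      have h3 := Finset.sum_mul_sq_le_sq_mul_sq (Finset.Icc kN i.val)
        (fun jN => Real.sqrt (cf kN jN)) (fun jN => Real.sqrt (cf kN jN) * V jN)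
      have e1 : ∀ jN, Real.sqrt (cf kN jN) * (Real.sqrt (cf kN jN) * V jN)
          = cf kN jN * V jN := by
        intro jN
        rw [← mul_assoc, Real.mul_self_sqrt (cfnn kN jN)]
      have e2 : ∀ jN, Real.sqrt (cf kN jN) ^ 2 = cf kN jN := fun jN =>
        Real.sq_sqrt (cfnn kN jN)
      have e3 : ∀ jN, (Real.sqrt (cf kN jN) * V jN) ^ 2 = cf kN jN * V jN ^ 2 := by
        intro jN
        rw [mul_pow, e2]
      calc (∑ jN ∈ Finset.Icc kN i.val, cf kN jN * V jN) ^ 2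
          = (∑ jN ∈ Finset.Icc kN i.val,
              Real.sqrt (cf kN jN) * (Real.sqrt (cf kN jN) * V jN)) ^ 2 := by
            rw [Finset.sum_congr rfl fun jN _ => (e1 jN).symm]
        _ ≤ (∑ jN ∈ Finset.Icc kN i.val, Real.sqrt (cf kN jN) ^ 2)
            * ∑ jN ∈ Finset.Icc kN i.val, (Real.sqrt (cf kN jN) * V jN) ^ 2 := h3
        _ = (∑ jN ∈ Finset.Icc kN i.val, cf kN jN)
            * ∑ jN ∈ Finset.Icc kN i.val, cf kN jN * V jN ^ 2 := by
            rw [Finset.sum_congr rfl fun jN _ => e2 jN,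
                Finset.sum_congr rfl fun jN _ => e3 jN]
    have h4 : (∑ jN ∈ Finset.Icc kN i.val, cf kN jN)
          * (∑ jN ∈ Finset.Icc kN i.val, cf kN jN * V jN ^ 2)
        ≤ 2^i.val * ∑ jN ∈ Finset.Icc kN i.val, cf kN jN * V jN ^ 2 := by
      refine mul_le_mul_of_nonneg_right (hrow kN hk) ?_
      exact Finset.sum_nonneg fun jN _ => mul_nonneg (cfnn kN jN) (sq_nonneg _)
    linarith
  -- sum and swap
  have hswap : ∑ kN ∈ Finset.Iic i.val, ∑ jN ∈ Finset.Icc kN i.val, cf kN jN * V jN ^ 2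
      = ∑ jN ∈ Finset.Iic i.val, ∑ kN ∈ Finset.Iic jN, cf kN jN * V jN ^ 2 := by
    refine Finset.sum_comm' ?_
    intro kN jN
    simp only [Finset.mem_Iic, Finset.mem_Icc]
    omega
  have hmain : ∑ kN ∈ Finset.Iic i.val, X kN ^ 2
      ≤ 4^i.val * ∑ jN ∈ Finset.Iic i.val, V jN ^ 2 := by
    calc ∑ kN ∈ Finset.Iic i.val, X kN ^ 2
        ≤ ∑ kN ∈ Finset.Iic i.val,
            2^i.val * ∑ jN ∈ Finset.Icc kN i.val, cf kN jN * V jN ^ 2 :=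
          Finset.sum_le_sum hCS
      _ = 2^i.val * ∑ kN ∈ Finset.Iic i.val,
            ∑ jN ∈ Finset.Icc kN i.val, cf kN jN * V jN ^ 2 := by
          rw [Finset.mul_sum]
      _ = 2^i.val * ∑ jN ∈ Finset.Iic i.val,
            (∑ kN ∈ Finset.Iic jN, cf kN jN) * V jN ^ 2 := by
          rw [hswap]
          congr 1
          refine Finset.sum_congr rfl fun jN _ => ?_
          rw [Finset.sum_mul]
      _ ≤ 2^i.val * ∑ jN ∈ Finset.Iic i.val, 2^i.val * V jN ^ 2 := by
          refine mul_le_mul_of_nonneg_left (Finset.sum_le_sum fun jN hj => ?_) (by positivity)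
          exact mul_le_mul_of_nonneg_right (hcol jN hj) (sq_nonneg _)
      _ = 4^i.val * ∑ jN ∈ Finset.Iic i.val, V jN ^ 2 := by
          rw [← Finset.mul_sum, ← mul_assoc]
          congr 1
          rw [show (4:ℝ) = 2 * 2 by norm_num, mul_pow]
  -- translate the Fin-sums
  have hxsum : ∑ j, (x j)^2 = ∑ kN ∈ Finset.Iic i.val, X kN ^ 2 := by
    have h1 : ∑ j, (x j)^2 = ∑ kN ∈ Finset.range n, X kN ^ 2 := by
      rw [← Fin.sum_univ_eq_sum_range (fun kN => X kN ^ 2) n]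
      refine Finset.sum_congr rfl fun j _ => ?_
      rw [hXval j, sq_abs]
    rw [h1]
    symm
    refine Finset.sum_subset ?_ ?_
    · intro a ha
      rw [Finset.mem_Iic] at ha
      rw [Finset.mem_range]
      exact lt_of_le_of_lt ha i.isLt
    · intro a _ ha
      rw [Finset.mem_Iic] at ha
      push_neg at ha
      have hXa : X a = 0 := by
        rw [hX]; dsimp only
        split
        · next h => rw [hx ⟨a, h⟩ (by rw [Fin.lt_def]; exact ha), abs_zero]
        · rfl
      rw [hXa]
      ring
  have hysum : (∑ jN ∈ Finset.Iic i.val, V jN ^ 2) * (R i i)^2 ≤ ∑ k, (y k)^2 := by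
    have h1 : ∑ jN ∈ Finset.Iic i.val, V jN ^ 2 ≤ ∑ jN ∈ Finset.range n, V jN ^ 2 := by
      refine Finset.sum_le_sum_of_subset_of_nonneg ?_ (fun jN _ _ => sq_nonneg _)
      intro a ha
      rw [Finset.mem_Iic] at ha
      rw [Finset.mem_range]
      exact lt_of_le_of_lt ha i.isLt
    have h2 : ∑ jN ∈ Finset.range n, V jN ^ 2 = ∑ k : Fin n, (|y k| / R i i)^2 := by
      rw [← Fin.sum_univ_eq_sum_range (fun jN => V jN ^ 2) n]
      exact Finset.sum_congr rfl fun k _ => by rw [hVval k]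
    have h3 : (∑ k : Fin n, (|y k| / R i i)^2) * (R i i)^2 = ∑ k, (y k)^2 := by
      rw [Finset.sum_mul]
      refine Finset.sum_congr rfl fun k _ => ?_
      rw [div_pow, sq_abs, div_mul_cancel₀]
      positivity
    calc (∑ jN ∈ Finset.Iic i.val, V jN ^ 2) * (R i i)^2
        ≤ (∑ jN ∈ Finset.range n, V jN ^ 2) * (R i i)^2 := by
          refine mul_le_mul_of_nonneg_right h1 (sq_nonneg _)
      _ = ∑ k, (y k)^2 := by rw [h2, h3]
  -- final assembly
  have h4pos : (0:ℝ) < 4^i.val := by positivity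
  have hqnn : 0 ≤ (R i i)^2 / 4^i.val := by positivity
  have hq4 : (R i i)^2 / 4^i.val * 4^i.val = (R i i)^2 :=
    div_mul_cancel₀ _ (ne_of_gt h4pos)
  calc (R i i)^2 / 4^i.val * ∑ j, (x j)^2
      = (R i i)^2 / 4^i.val * ∑ kN ∈ Finset.Iic i.val, X kN ^ 2 := by rw [hxsum]
    _ ≤ (R i i)^2 / 4^i.val * (4^i.val * ∑ jN ∈ Finset.Iic i.val, V jN ^ 2) :=
        mul_le_mul_of_nonneg_left hmain hqnn
    _ = (∑ jN ∈ Finset.Iic i.val, V jN ^ 2) * (R i i)^2 := by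
        rw [← mul_assoc, hq4]; ring
    _ ≤ ∑ k, (y k)^2 := hysum

/-- Step 3 of the proof of Theorem 3.5 (lower bound): for an
upper triangular `R` with non-increasing diagonal dominating its rows
(`|r_{sj}| ≤ r_{ss}` for `s ≤ j`) and `rᵢᵢ > 0`,
`λᵢ(RᵀR) ≥ rᵢᵢ² / 4^{i−1}`. -/
theorem stmt_11 {n : ℕ} (R : Matrix (Fin n) (Fin n) ℝ)
    (htri : ∀ i j : Fin n, j < i → R i j = 0)
    (hdiag_mono : ∀ i j : Fin n, i ≤ j → R j j ≤ R i i)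
    (hdom : ∀ s j : Fin n, s ≤ j → |R s j| ≤ R s s)
    (i : Fin n) (hpos : 0 < R i i) :
    ∀ (hRR : (Rᵀ * R).IsHermitian),
      (R i i) ^ 2 / 4 ^ i.val ≤ eigsDesc hRR i := by
  intro hRR
  classical
  set f : {k : Fin n // k ≤ i} → EuclideanSpace ℝ (Fin n) :=
    fun k => EuclideanSpace.single (k.1 : Fin n) (1:ℝ) with hf
  have hfb : ∀ k : {k : Fin n // k ≤ i}, f k = EuclideanSpace.basisFun (Fin n) ℝ k.1 := by
    intro k; rw [hf]; simp [EuclideanSpace.basisFun_apply]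
  have hfli : LinearIndependent ℝ f := by
    have h1 : f = fun k : {k : Fin n // k ≤ i} => EuclideanSpace.basisFun (Fin n) ℝ k.1 :=
      funext hfb
    rw [h1]
    exact (EuclideanSpace.basisFun (Fin n) ℝ).orthonormal.linearIndependent.comp
      _ Subtype.val_injective
  set W := Submodule.span ℝ (Set.range f) with hW
  have hWrank : i.val + 1 ≤ Module.finrank ℝ W := by
    rw [hW, finrank_span_eq_card hfli, card_le_subtype]
  refine quad_form_le_eigsDesc hRR i _ W hWrank ?_
  intro x hxW
  set xf : Fin n → ℝ := (WithLp.equiv 2 (Fin n → ℝ)) x with hxf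
  -- coordinates beyond i vanish
  have hcoord : ∀ j : Fin n, i < j → xf j = 0 := by
    intro j hj
    have hle : W ≤ LinearMap.ker (innerSL ℝ (EuclideanSpace.single j (1:ℝ))).toLinearMap := by
      rw [hW, Submodule.span_le]
      rintro _ ⟨k, rfl⟩
      simp only [SetLike.mem_coe, LinearMap.mem_ker, ContinuousLinearMap.coe_coe, innerSL_apply_apply,
        hf]
      rw [EuclideanSpace.inner_single_left]
      have : (EuclideanSpace.single (k.1 : Fin n) (1:ℝ)) j = 0 := by
        rw [EuclideanSpace.single_apply, if_neg]
        exact fun h => absurd (h ▸ k.2) (not_le.mpr hj)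
      rw [this]
      simp
    have h0 := hle hxW
    simp only [LinearMap.mem_ker, ContinuousLinearMap.coe_coe, innerSL_apply_apply] at h0
    rw [EuclideanSpace.inner_single_left] at h0
    simpa [hxf] using h0
  -- the quadratic form
  have hquad : ⟪x, Matrix.toEuclideanLin (Rᵀ * R) x⟫ = ∑ k, ((R *ᵥ xf) k)^2 := by
    have h1 : ⟪x, Matrix.toEuclideanLin (Rᵀ * R) x⟫
        = xf ⬝ᵥ ((Rᵀ * R) *ᵥ xf) := by
      rw [Matrix.toEuclideanLin_apply]
      rw [PiLp.inner_apply]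
      simp only [RCLike.inner_apply, starRingEnd_apply, star_trivial]
      rw [dotProduct]
      exact Finset.sum_congr rfl fun k _ => mul_comm _ _
    rw [h1, ← Matrix.mulVec_mulVec, Matrix.dotProduct_mulVec, Matrix.vecMul_transpose]
    rw [dotProduct]
    exact Finset.sum_congr rfl fun k _ => (sq ((R *ᵥ xf) k)).symm
  have hnorm : ‖x‖^2 = ∑ j, (xf j)^2 := by
    rw [← real_inner_self_eq_norm_sq, PiLp.inner_apply]
    simp only [RCLike.inner_apply, starRingEnd_apply, star_trivial]
    exact Finset.sum_congr rfl fun j _ => (sq (xf j)).symm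
  rw [hquad, hnorm]
  exact tri_bound R htri hdiag_mono hdom i hpos xf hcoord
end
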